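/- arXiv:2102.13339 — 10 statements merged into one kernel-verified Lean document; each statement's English description precedes it below -/
import Mathlib

section
/- Let (t1, t2, t3) be a generic triple of nonzero complex numbers, i.e. t_p ≠ t_q and t_p ≠ −t_q for all p ≠ q. If both ⟦t2,t1⟧/⟦t3,t1⟧ and ⟦t3,t2⟧/⟦t3,t1⟧ are real numbers, then either |t1| = |t2| = |t3|, or both t1/t2 and t2/t3 are real numbers. -/
/-- The bracket `⟦x,y⟧ := x/y − y/x` for complex numbers. -/
noncomputable def brkt (x y : ℂ) : ℂ := x / y - y / x

/-- Lemma 7.1(i): for a generic triple of nonzero complex numbers, if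
`⟦t2,t1⟧/⟦t3,t1⟧` and `⟦t3,t2⟧/⟦t3,t1⟧` are real, then either all three have the
same absolute value, or `t1/t2` and `t2/t3` are real. -/
theorem generic_triple_real (t1 t2 t3 : ℂ)
    (h1 : t1 ≠ 0) (h2 : t2 ≠ 0) (h3 : t3 ≠ 0)
    (h12 : t1 ≠ t2) (h12' : t1 ≠ -t2)
    (h13 : t1 ≠ t3) (h13' : t1 ≠ -t3)
    (h23 : t2 ≠ t3) (h23' : t2 ≠ -t3)
    (ha : (brkt t2 t1 / brkt t3 t1).im = 0)
    (hb : (brkt t3 t2 / brkt t3 t1).im = 0) :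
    (‖t1‖ = ‖t2‖ ∧ ‖t2‖ = ‖t3‖) ∨
      ((t1 / t2).im = 0 ∧ (t2 / t3).im = 0) := by
  set u : ℂ := t1 / t2 with hu
  set v : ℂ := t3 / t2 with hv
  set cu : ℂ := (starRingEnd ℂ) u with hcu
  set cv : ℂ := (starRingEnd ℂ) v with hcv
  have hu0 : u ≠ 0 := div_ne_zero h1 h2
  have hv0 : v ≠ 0 := div_ne_zero h3 h2
  have hcu0 : cu ≠ 0 := by simp [hcu, hu0]
  have hcv0 : cv ≠ 0 := by simp [hcv, hv0]
  -- u ≠ v, u ≠ -v, u ≠ ±1, v ≠ ±1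
  have huv : u ≠ v := by
    intro h
    rw [hu, hv, div_eq_div_iff h2 h2] at h
    exact h13 (mul_right_cancel₀ h2 h)
  have huv' : u ≠ -v := by
    intro h
    apply h13'
    rw [hu, hv] at h
    rw [← neg_div] at h
    rw [div_eq_div_iff h2 h2] at h
    exact mul_right_cancel₀ h2 h
  have hu1 : u ≠ 1 := by
    intro h; exact h12 ((div_eq_one_iff_eq h2).mp (hu ▸ h))
  have hu1' : u ≠ -1 := by
    intro h
    apply h12'
    have : t1 / t2 = -1 := hu ▸ h
    field_simp at this
    linear_combination this
  have hv1 : v ≠ 1 := by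
    intro h; exact h23 ((div_eq_one_iff_eq h2).mp (hv ▸ h)).symm
  have hv1' : v ≠ -1 := by
    intro h
    apply h23'
    have : t3 / t2 = -1 := hv ▸ h
    field_simp at this
    linear_combination this
  have hcuv : cu ≠ cv := fun h => huv ((starRingEnd ℂ).injective (hcu ▸ hcv ▸ h))
  have hcuv' : cu ≠ -cv := by
    intro h
    apply huv'
    have h' : (starRingEnd ℂ) cu = (starRingEnd ℂ) (-cv) := by rw [h]
    simpa [hcu, hcv] using h'
  -- denominators
  have hdv : v ^ 2 - u ^ 2 ≠ 0 := by
    intro h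
    have : (v - u) * (v + u) = 0 := by linear_combination h
    rcases mul_eq_zero.mp this with h' | h'
    · exact huv (sub_eq_zero.mp h').symm
    · exact huv' (by linear_combination h')
  have hcdv : cv ^ 2 - cu ^ 2 ≠ 0 := by
    intro h
    have : (cv - cu) * (cv + cu) = 0 := by linear_combination h
    rcases mul_eq_zero.mp this with h' | h'
    · exact hcuv (sub_eq_zero.mp h').symm
    · exact hcuv' (by linear_combination h')
  have hb31 : brkt t3 t1 ≠ 0 := by
    rw [brkt]
    intro h
    have h' : t3 * t3 - t1 * t1 = 0 := by
      field_simp at h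
      linear_combination h
    have : (t3 - t1) * (t3 + t1) = 0 := by linear_combination h'
    rcases mul_eq_zero.mp this with h' | h'
    · exact h13 (sub_eq_zero.mp h').symm
    · exact h13' (by linear_combination h')
  -- express the two ratios in u, v
  have hX : brkt t2 t1 / brkt t3 t1 = v * (1 - u ^ 2) / (v ^ 2 - u ^ 2) := by
    rw [div_eq_div_iff hb31 hdv, brkt, brkt, hu, hv]
    field_simp
  have hY : brkt t3 t2 / brkt t3 t1 = u * (v ^ 2 - 1) / (v ^ 2 - u ^ 2) := by
    rw [div_eq_div_iff hb31 hdv, brkt, brkt, hu, hv]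
    field_simp
  -- conjugation equations
  have ea : (starRingEnd ℂ) (v * (1 - u ^ 2) / (v ^ 2 - u ^ 2))
      = v * (1 - u ^ 2) / (v ^ 2 - u ^ 2) := by
    rw [← hX]; exact Complex.conj_eq_iff_im.mpr ha
  have eb : (starRingEnd ℂ) (u * (v ^ 2 - 1) / (v ^ 2 - u ^ 2))
      = u * (v ^ 2 - 1) / (v ^ 2 - u ^ 2) := by
    rw [← hY]; exact Complex.conj_eq_iff_im.mpr hb
  rw [map_div₀, map_mul, map_sub, map_one, map_pow, map_sub, map_pow, map_pow,
    ← hcu, ← hcv, div_eq_div_iff hcdv hdv] at ea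
  rw [map_div₀, map_mul, map_sub, map_one, map_pow, map_sub, map_pow, map_pow,
    ← hcu, ← hcv, div_eq_div_iff hcdv hdv] at eb
  -- ea : cv * (1 - cu^2) * (v^2-u^2) = v * (1-u^2) * (cv^2-cu^2)
  -- eb : cu * (cv^2 - 1) * (v^2-u^2) = u * (v^2-1) * (cv^2-cu^2)
  have hD : (v - u) * (cv - cu) * ((u + v) * (cu + cv)) ≠ 0 := by
    apply mul_ne_zero
    · exact mul_ne_zero (sub_ne_zero.mpr (Ne.symm huv)) (sub_ne_zero.mpr (Ne.symm hcuv))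
    · apply mul_ne_zero
      · intro h; exact huv' (by linear_combination h)
      · intro h; exact hcuv' (by linear_combination h)
  have hP : (u - cu) * (1 - v * cv) = 0 := by
    have h0 : (v - u) * (cv - cu) * ((u + v) * (cu + cv)) * ((u - cu) * (1 - v * cv)) = 0 := by
      linear_combination (((u + v) * (cu + cv) - (v - u) * (cv - cu)) / 2) * ea
        + (((u + v) * (cu + cv) + (v - u) * (cv - cu)) / 2) * eb
    exact (mul_eq_zero.mp h0).resolve_left hD
  have hQ : (v - cv) * (1 - u * cu) = 0 := by
    have h0 : (v - u) * (cv - cu) * ((u + v) * (cu + cv)) * ((v - cv) * (1 - u * cu)) = 0 := by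
      linear_combination (((u + v) * (cu + cv) + (v - u) * (cv - cu)) / 2) * ea
        + (((u + v) * (cu + cv) - (v - u) * (cv - cu)) / 2) * eb
    exact (mul_eq_zero.mp h0).resolve_left hD
  rcases mul_eq_zero.mp hP with hP' | hP' <;> rcases mul_eq_zero.mp hQ with hQ' | hQ'
  · -- u = cu and v = cv : both real
    right
    have hureal : ((t1 / t2 : ℂ)).im = 0 := by
      rw [← hu]
      exact Complex.conj_eq_iff_im.mp (hcu ▸ (sub_eq_zero.mp hP').symm)
    have hvreal : v.im = 0 :=
      Complex.conj_eq_iff_im.mp (hcv ▸ (sub_eq_zero.mp hQ').symm)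
    refine ⟨hureal, ?_⟩
    have h23div : t2 / t3 = v⁻¹ := by rw [hv]; field_simp
    rw [h23div]
    rw [← Complex.conj_eq_iff_im] at hvreal ⊢
    rw [map_inv₀, hvreal]
  · -- u = cu (u real) and u * cu = 1 : u² = 1, contradiction
    exfalso
    have hu2 : u * u = 1 := by
      have heq : u = cu := sub_eq_zero.mp hP'
      have h1' : u * cu = 1 := by linear_combination -hQ'
      rw [← heq] at h1'
      exact h1'
    have : (u - 1) * (u + 1) = 0 := by linear_combination hu2
    rcases mul_eq_zero.mp this with h' | h'
    · exact hu1 (by linear_combination h')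
    · exact hu1' (by linear_combination h')
  · -- v * cv = 1 and v = cv : v² = 1, contradiction
    exfalso
    have hv2 : v * v = 1 := by
      have heq : v = cv := sub_eq_zero.mp hQ'
      have h1' : v * cv = 1 := by linear_combination -hP'
      rw [← heq] at h1'
      exact h1'
    have : (v - 1) * (v + 1) = 0 := by linear_combination hv2
    rcases mul_eq_zero.mp this with h' | h'
    · exact hv1 (by linear_combination h')
    · exact hv1' (by linear_combination h')
  · -- |u| = |v| = 1
    left
    have habs : ∀ z : ℂ, z ≠ 0 → z * (starRingEnd ℂ) z = 1 → ‖z‖ = 1 := by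
      intro z hz hz1
      have h1' : (Complex.normSq z : ℂ) = 1 := by rw [← Complex.mul_conj]; exact hz1
      have h2' : Complex.normSq z = 1 := by exact_mod_cast h1'
      have := Complex.sq_norm z
      nlinarith [norm_nonneg z]
    have hau : ‖u‖ = 1 := by
      apply habs u hu0
      rw [← hcu]
      linear_combination -hQ'
    have hav : ‖v‖ = 1 := by
      apply habs v hv0
      rw [← hcv]
      linear_combination -hP'
    have h2a : ‖t2‖ ≠ 0 := norm_ne_zero_iff.mpr h2
    constructor
    · have : ‖t1‖ / ‖t2‖ = 1 := by
        rw [← norm_div, ← hu, hau]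
      field_simp at this
      exact this
    · have : ‖t3‖ / ‖t2‖ = 1 := by
        rw [← norm_div, ← hv, hav]
      field_simp at this
      exact this.symm
end

section
/- Let (t1, t2, t3) be a generic triple of nonzero complex numbers, i.e. t_p ≠ t_q and t_p ≠ −t_q for all p ≠ q. If both ⟦t2,t1⟧/⟦t3,t1⟧ and ⟦t3,t2⟧/⟦t3,t1⟧ are purely imaginary, then both t1/t2 and t2/t3 are purely imaginary. -/
/-- Lemma 7.1(ii): for a generic triple of nonzero complex numbers, if
`⟦t2,t1⟧/⟦t3,t1⟧` and `⟦t3,t2⟧/⟦t3,t1⟧` are purely imaginary, then `t1/t2` and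
`t2/t3` are purely imaginary. -/
theorem generic_triple_imaginary (t1 t2 t3 : ℂ)
    (h1 : t1 ≠ 0) (h2 : t2 ≠ 0) (h3 : t3 ≠ 0)
    (h12 : t1 ≠ t2) (h12' : t1 ≠ -t2)
    (h13 : t1 ≠ t3) (h13' : t1 ≠ -t3)
    (h23 : t2 ≠ t3) (h23' : t2 ≠ -t3)
    (ha : (brkt t2 t1 / brkt t3 t1).re = 0)
    (hb : (brkt t3 t2 / brkt t3 t1).re = 0) :
    (t1 / t2).re = 0 ∧ (t2 / t3).re = 0 := by
  have hne13 : t3 - t1 ≠ 0 := sub_ne_zero.2 (Ne.symm h13)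
  have hne13' : t3 + t1 ≠ 0 := by
    intro h; exact h13' (by linear_combination h)
  have hbr : brkt t3 t1 ≠ 0 := by
    unfold brkt
    have e : t3 / t1 - t1 / t3 = (t3 - t1) * (t3 + t1) / (t1 * t3) := by
      field_simp; ring
    rw [e]
    exact div_ne_zero (mul_ne_zero hne13 hne13') (mul_ne_zero h1 h3)
  have hQ1 : (1 : ℂ) + t1 / t3 ≠ 0 := by
    intro h; apply hne13'
    field_simp at h
    linear_combination h
  have hQ2 : (1 : ℂ) - t1 / t3 ≠ 0 := by
    intro h; apply hne13
    field_simp at h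
    linear_combination h
  set Q : ℂ := t1 / t3 with hQdef
  set s : ℂ := (t1 / t2 + t2 / t3) / (1 + Q) with hsdef
  set d : ℂ := (t1 / t2 - t2 / t3) / (1 - Q) with hddef
  have hsum : brkt t2 t1 / brkt t3 t1 + brkt t3 t2 / brkt t3 t1 = s := by
    rw [← add_div]
    have e1 : brkt t2 t1 + brkt t3 t2 = s * brkt t3 t1 := by
      rw [hsdef, hQdef]; unfold brkt; field_simp; ring
    rw [e1, mul_div_assoc, div_self hbr, mul_one]
  have hdiff : brkt t3 t2 / brkt t3 t1 - brkt t2 t1 / brkt t3 t1 = d := by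
    rw [div_sub_div_same]
    have e1 : brkt t3 t2 - brkt t2 t1 = d * brkt t3 t1 := by
      rw [hddef, hQdef]; unfold brkt; field_simp; ring
    rw [e1, mul_div_assoc, div_self hbr, mul_one]
  have hs0 : s.re = 0 := by
    rw [← hsum, Complex.add_re, ha, hb]; ring
  have hd0 : d.re = 0 := by
    rw [← hdiff, Complex.sub_re, ha, hb]; ring
  have hsQ : s * (1 + Q) = t1 / t2 + t2 / t3 := by
    rw [hsdef]; exact div_mul_cancel₀ _ hQ1
  have hdQ : d * (1 - Q) = t1 / t2 - t2 / t3 := by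
    rw [hddef]; exact div_mul_cancel₀ _ hQ2
  have master : s ^ 2 * (1 + Q) ^ 2 - d ^ 2 * (1 - Q) ^ 2 = 4 * Q := by
    have e4 : (t1 / t2 + t2 / t3) ^ 2 - (t1 / t2 - t2 / t3) ^ 2 = 4 * Q := by
      rw [hQdef]; field_simp; ring
    calc s ^ 2 * (1 + Q) ^ 2 - d ^ 2 * (1 - Q) ^ 2
        = (s * (1 + Q)) ^ 2 - (d * (1 - Q)) ^ 2 := by ring
      _ = (t1 / t2 + t2 / t3) ^ 2 - (t1 / t2 - t2 / t3) ^ 2 := by rw [hsQ, hdQ]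
      _ = 4 * Q := e4
  have hsI : s = (s.im : ℂ) * Complex.I := by
    apply Complex.ext <;> simp [hs0]
  have hs2 : s ^ 2 = -((s.im : ℂ)) ^ 2 := by
    conv_lhs => rw [hsI]
    rw [mul_pow, Complex.I_sq]; ring
  have hdI : d = (d.im : ℂ) * Complex.I := by
    apply Complex.ext <;> simp [hd0]
  have hd2 : d ^ 2 = -((d.im : ℂ)) ^ 2 := by
    conv_lhs => rw [hdI]
    rw [mul_pow, Complex.I_sq]; ring
  have key : ((d.im ^ 2 - s.im ^ 2 : ℝ) : ℂ) * Q ^ 2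
      - ((2 * s.im ^ 2 + 2 * d.im ^ 2 + 4 : ℝ) : ℂ) * Q
      + ((d.im ^ 2 - s.im ^ 2 : ℝ) : ℂ) = 0 := by
    push_cast
    linear_combination master - (1 + Q) ^ 2 * hs2 + (1 - Q) ^ 2 * hd2
  clear_value Q s d
  have him := congrArg Complex.im key
  have hre := congrArg Complex.re key
  simp [Complex.add_im, Complex.sub_im, Complex.mul_im, Complex.mul_re,
    Complex.add_re, Complex.sub_re, pow_two] at him hre
  have hQim : Q.im = 0 := by
    by_contra hy
    have h2 : 2 * (d.im * d.im - s.im * s.im) * Q.re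
        - (2 * (s.im * s.im) + 2 * (d.im * d.im) + 4) = 0 := by
      have hfac : (2 * (d.im * d.im - s.im * s.im) * Q.re
          - (2 * (s.im * s.im) + 2 * (d.im * d.im) + 4)) * Q.im = 0 := by
        linear_combination him
      rcases mul_eq_zero.1 hfac with h | h
      · exact h
      · exact absurd h hy
    have ha0 : d.im * d.im - s.im * s.im ≠ 0 := by
      intro h
      rw [h] at h2
      nlinarith [sq_nonneg s.im, sq_nonneg d.im, h2]
    have hxy : Q.re * Q.re + Q.im * Q.im = 1 := by
      have h4 : (d.im * d.im - s.im * s.im) * (1 - Q.re * Q.re - Q.im * Q.im) = 0 := by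
        linear_combination hre - Q.re * h2
      rcases mul_eq_zero.1 h4 with h | h
      · exact absurd h ha0
      · linarith
    have h5 : (2 * (d.im * d.im - s.im * s.im) * Q.re) ^ 2
        = (2 * (s.im * s.im) + 2 * (d.im * d.im) + 4) ^ 2 := by
      linear_combination (2 * (d.im * d.im - s.im * s.im) * Q.re
        + (2 * (s.im * s.im) + 2 * (d.im * d.im) + 4)) * h2
    have h7 : (2 * (s.im * s.im) + 2 * (d.im * d.im) + 4) ^ 2
        + (2 * (d.im * d.im - s.im * s.im) * Q.im) ^ 2
        = 4 * (d.im * d.im - s.im * s.im) ^ 2 := by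
      linear_combination (-1 : ℝ) * h5 + (2 * (d.im * d.im - s.im * s.im)) ^ 2 * hxy
    have h8 : (2 * (s.im * s.im) + 2 * (d.im * d.im) + 4) ^ 2
        - 4 * (d.im * d.im - s.im * s.im) ^ 2
        = 16 * ((s.im * d.im) ^ 2 + s.im ^ 2 + d.im ^ 2 + 1) := by ring
    linarith [h7, h8, sq_nonneg (2 * (d.im * d.im - s.im * s.im) * Q.im),
      sq_nonneg (s.im * d.im), sq_nonneg s.im, sq_nonneg d.im]
  have hu2 : 2 * (t1 / t2) = s * (1 + Q) + d * (1 - Q) := by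
    linear_combination -hsQ - hdQ
  have hv2 : 2 * (t2 / t3) = s * (1 + Q) - d * (1 - Q) := by
    linear_combination hdQ - hsQ
  have e1 : (1 + Q).im = 0 := by simp [Complex.add_im, hQim]
  have e2 : (1 - Q).im = 0 := by simp [Complex.sub_im, hQim]
  constructor
  · have h := congrArg Complex.re hu2
    simp [Complex.add_re, Complex.sub_re, Complex.mul_re, hs0, hd0, e1, e2] at h
    linarith [h]
  · have h := congrArg Complex.re hv2
    simp [Complex.add_re, Complex.sub_re, Complex.mul_re, hs0, hd0, e1, e2] at h
    linarith [h]
end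

section
/- For all nonzero complex numbers t1, t2, t3, t4, set z1 := ⟦t2,t1⟧, z2 := ⟦t3,t2⟧, z3 := ⟦t4,t3⟧, z4 := ⟦t4,t1⟧, x := ⟦t3,t1⟧, y := ⟦t4,t2⟧. Then x·y = z1·z3 + z2·z4, x²·(z1·z2 + z3·z4) = (z1·z3 + z2·z4)·(z1·z4 + z2·z3), and y²·(z1·z4 + z2·z3) = (z1·z3 + z2·z4)·(z1·z2 + z3·z4). -/
set_option maxHeartbeats 2000000


lemma brkt_eq (x y : ℂ) (hx : x ≠ 0) (hy : y ≠ 0) :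
    brkt x y = (x ^ 2 - y ^ 2) / (x * y) := by
  unfold brkt; field_simp

/-- The relations among the six quantities `⟦t_q,t_p⟧` (1 ≤ p < q ≤ 4) used in the
proof of the quadrilateral lemma: with `z1 = ⟦t2,t1⟧`, `z2 = ⟦t3,t2⟧`,
`z3 = ⟦t4,t3⟧`, `z4 = ⟦t4,t1⟧`, `x = ⟦t3,t1⟧`, `y = ⟦t4,t2⟧`, one has
`x·y = z1·z3 + z2·z4`, `x²·(z1·z2 + z3·z4) = (z1·z3 + z2·z4)·(z1·z4 + z2·z3)` and
`y²·(z1·z4 + z2·z3) = (z1·z3 + z2·z4)·(z1·z2 + z3·z4)`. -/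
theorem bracket_quad_relations (t1 t2 t3 t4 : ℂ)
    (h1 : t1 ≠ 0) (h2 : t2 ≠ 0) (h3 : t3 ≠ 0) (h4 : t4 ≠ 0) :
    brkt t3 t1 * brkt t4 t2 = brkt t2 t1 * brkt t4 t3 + brkt t3 t2 * brkt t4 t1 ∧
    (brkt t3 t1) ^ 2 * (brkt t2 t1 * brkt t3 t2 + brkt t4 t3 * brkt t4 t1) =
      (brkt t2 t1 * brkt t4 t3 + brkt t3 t2 * brkt t4 t1) *
        (brkt t2 t1 * brkt t4 t1 + brkt t3 t2 * brkt t4 t3) ∧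
    (brkt t4 t2) ^ 2 * (brkt t2 t1 * brkt t4 t1 + brkt t3 t2 * brkt t4 t3) =
      (brkt t2 t1 * brkt t4 t3 + brkt t3 t2 * brkt t4 t1) *
        (brkt t2 t1 * brkt t3 t2 + brkt t4 t3 * brkt t4 t1) := by
  rw [brkt_eq t3 t1 h3 h1, brkt_eq t4 t2 h4 h2, brkt_eq t2 t1 h2 h1,
    brkt_eq t4 t3 h4 h3, brkt_eq t3 t2 h3 h2, brkt_eq t4 t1 h4 h1]
  refine ⟨?_, ?_, ?_⟩ <;>
  · simp only [div_pow, div_mul_div_comm]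
    repeat rw [div_add_div _ _ (by simp [h1, h2, h3, h4]) (by simp [h1, h2, h3, h4])]
    try simp only [div_mul_div_comm]
    rw [div_eq_div_iff (by simp [h1, h2, h3, h4]) (by simp [h1, h2, h3, h4])]
    ring
end

section
/- Let m be a positive integer and let a_1, …, a_m be positive real numbers such that a_p < Σ_{q ≠ p} a_q for every p ∈ [m] (strict polygon inequality). Then there exists a unique tuple (θ_1, …, θ_m) of real numbers with 0 = θ_1 < θ_2 < … < θ_m < π such that, setting θ_{m+1} := π, one has sin(θ_{p+1} − θ_p)·a_q = sin(θ_{q+1} − θ_q)·a_p for all p, q ∈ [m]. (Knowing the ratios of side lengths of a convex polygon inscribed in a circle determines its angles.) -/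
open Real Set in
private lemma convex_three' {s : Set ℝ} {f : ℝ → ℝ} (hf : ConvexOn ℝ s f) {x y z : ℝ}
    (hx : x ∈ s) (hz : z ∈ s) (hxy : x < y) (hyz : y < z)
    (hfx : f x < 0) (hfz : f z ≤ 0) : f y < 0 := by
  have hxz : x < z := hxy.trans hyz
  have hne : z - x ≠ 0 := by intro h; linarith [sub_eq_zero.1 h]
  have h1 : 0 < (z - y) / (z - x) := div_pos (by linarith) (by linarith)
  have h2 : 0 < (y - x) / (z - x) := div_pos (by linarith) (by linarith)
  have h3 : (z - y) / (z - x) + (y - x) / (z - x) = 1 := by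
    rw [← add_div]
    field_simp
    ring
  have h5 := hf.2 hx hz h1.le h2.le h3
  simp only [smul_eq_mul] at h5
  have h4 : (z - y) / (z - x) * x + (y - x) / (z - x) * z = y := by
    field_simp
    ring
  rw [h4] at h5
  nlinarith

set_option maxHeartbeats 1000000 in
open Real Set in
private lemma arcsinSin_concave' {r : ℝ} (hr0 : 0 ≤ r) (hr1 : r ≤ 1) :
    ConcaveOn ℝ (Set.Icc 0 (π / 2)) (fun u => arcsin (r * Real.sin u)) := by
  have hpi := Real.pi_pos
  have hD : Convex ℝ (Set.Icc (0 : ℝ) (π / 2)) := convex_Icc _ _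
  have hslt : ∀ u : ℝ, 0 < u → u < π / 2 → Real.sin u < 1 := by
    intro u h0 h2
    rw [← Real.sin_pi_div_two]
    exact Real.strictMonoOn_sin ⟨by linarith, h2.le⟩ ⟨by linarith, le_rfl⟩ h2
  have hderiv : ∀ u ∈ Set.Ioo (0 : ℝ) (π / 2),
      HasDerivAt (fun u => arcsin (r * Real.sin u))
        (1 / Real.sqrt (1 - (r * Real.sin u) ^ 2) * (r * Real.cos u)) u := by
    intro u hu
    have hs0 : 0 ≤ Real.sin u := Real.sin_nonneg_of_nonneg_of_le_pi hu.1.le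
      (by linarith [hu.2])
    have hs1 : Real.sin u < 1 := hslt u hu.1 hu.2
    have h1 : r * Real.sin u ≠ -1 := by nlinarith
    have h2 : r * Real.sin u ≠ 1 := by nlinarith
    exact (Real.hasDerivAt_arcsin h1 h2).comp u ((Real.hasDerivAt_sin u).const_mul r)
  refine AntitoneOn.concaveOn_of_deriv hD ?_ ?_ ?_
  · exact (Real.continuous_arcsin.comp (continuous_const.mul Real.continuous_sin)).continuousOn
  · rw [interior_Icc]
    exact fun u hu => ((hderiv u hu).differentiableAt).differentiableWithinAt
  · rw [interior_Icc]
    intro x hx y hy hxy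
    rw [(hderiv x hx).deriv, (hderiv y hy).deriv]
    have hcx : 0 < Real.cos x := Real.cos_pos_of_mem_Ioo ⟨by linarith [hx.1], hx.2⟩
    have hcy : 0 < Real.cos y := Real.cos_pos_of_mem_Ioo ⟨by linarith [hy.1], hy.2⟩
    have hcc : Real.cos y ≤ Real.cos x :=
      Real.cos_le_cos_of_nonneg_of_le_pi hx.1.le (by linarith [hy.2]) hxy
    have hsx : (Real.sin x) ^ 2 = 1 - (Real.cos x) ^ 2 := by
      nlinarith [Real.sin_sq_add_cos_sq x]
    have hsy : (Real.sin y) ^ 2 = 1 - (Real.cos y) ^ 2 := by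
      nlinarith [Real.sin_sq_add_cos_sq y]
    have hsx0 : 0 ≤ Real.sin x := Real.sin_nonneg_of_nonneg_of_le_pi hx.1.le
      (by linarith [hx.2])
    have hsy0 : 0 ≤ Real.sin y := Real.sin_nonneg_of_nonneg_of_le_pi hy.1.le
      (by linarith [hy.2])
    have hsltx : Real.sin x < 1 := hslt x hx.1 hx.2
    have hslty : Real.sin y < 1 := hslt y hy.1 hy.2
    have htx0 : 0 ≤ r * Real.sin x := mul_nonneg hr0 hsx0
    have hty0 : 0 ≤ r * Real.sin y := mul_nonneg hr0 hsy0
    have htx1 : r * Real.sin x < 1 := by nlinarith [mul_le_mul_of_nonneg_right hr1 hsx0]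
    have hty1 : r * Real.sin y < 1 := by nlinarith [mul_le_mul_of_nonneg_right hr1 hsy0]
    have hAx : 0 < 1 - (r * Real.sin x) ^ 2 := by
      nlinarith [mul_pos (by linarith : (0:ℝ) < 1 - r * Real.sin x)
        (by linarith : (0:ℝ) < 1 + r * Real.sin x)]
    have hAy : 0 < 1 - (r * Real.sin y) ^ 2 := by
      nlinarith [mul_pos (by linarith : (0:ℝ) < 1 - r * Real.sin y)
        (by linarith : (0:ℝ) < 1 + r * Real.sin y)]
    have hsqx : 0 < Real.sqrt (1 - (r * Real.sin x) ^ 2) := Real.sqrt_pos.2 hAx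
    have hsqy : 0 < Real.sqrt (1 - (r * Real.sin y) ^ 2) := Real.sqrt_pos.2 hAy
    rw [div_mul_eq_mul_div, div_mul_eq_mul_div, one_mul, one_mul,
      div_le_div_iff₀ hsqy hsqx]
    have hccsq : Real.cos y ^ 2 ≤ Real.cos x ^ 2 := by nlinarith
    have hr2 : 0 ≤ r ^ 2 * (1 - r ^ 2) := by
      nlinarith [mul_nonneg (mul_nonneg hr0 hr0)
        (mul_nonneg (sub_nonneg.2 hr1) (by linarith : (0:ℝ) ≤ 1 + r))]
    have key : (r * Real.cos y) ^ 2 * (1 - (r * Real.sin x) ^ 2)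
        ≤ (r * Real.cos x) ^ 2 * (1 - (r * Real.sin y) ^ 2) := by
      have e1 : (r * Real.sin x) ^ 2 = r ^ 2 * (1 - Real.cos x ^ 2) := by
        rw [mul_pow, hsx]
      have e2 : (r * Real.sin y) ^ 2 = r ^ 2 * (1 - Real.cos y ^ 2) := by
        rw [mul_pow, hsy]
      rw [e1, e2]
      nlinarith [mul_nonneg hr2 (sub_nonneg.2 hccsq)]
    calc r * Real.cos y * Real.sqrt (1 - (r * Real.sin x) ^ 2)
        = Real.sqrt ((r * Real.cos y) ^ 2 * (1 - (r * Real.sin x) ^ 2)) := by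
          rw [Real.sqrt_mul (sq_nonneg _), Real.sqrt_sq (by positivity)]
      _ ≤ Real.sqrt ((r * Real.cos x) ^ 2 * (1 - (r * Real.sin y) ^ 2)) :=
          Real.sqrt_le_sqrt key
      _ = r * Real.cos x * Real.sqrt (1 - (r * Real.sin y) ^ 2) := by
          rw [Real.sqrt_mul (sq_nonneg _), Real.sqrt_sq (by positivity)]

/-- partial-sum map sending side angles to vertex angles -/
private noncomputable def thetaOf {m : ℕ} (Δ : Fin m → ℝ) : Fin (m + 1) → ℝ :=
  fun j => ∑ p ∈ Finset.univ.filter (fun p : Fin m => (p : ℕ) < (j : ℕ)), Δ p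

private lemma thetaOf_zero {m : ℕ} (Δ : Fin m → ℝ) : thetaOf Δ 0 = 0 := by
  simp [thetaOf]

private lemma thetaOf_last {m : ℕ} (Δ : Fin m → ℝ) :
    thetaOf Δ (Fin.last m) = ∑ p, Δ p := by
  simp [thetaOf, Fin.is_lt]

private lemma thetaOf_diff {m : ℕ} (Δ : Fin m → ℝ) (j : Fin m) :
    thetaOf Δ j.succ - thetaOf Δ j.castSucc = Δ j := by
  have hset : (Finset.univ.filter (fun p : Fin m => (p : ℕ) < (j.succ : ℕ)))
      = insert j (Finset.univ.filter fun p : Fin m => (p : ℕ) < (j.castSucc : ℕ)) := by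
    ext p
    simp only [Finset.mem_filter, Finset.mem_univ, true_and, Finset.mem_insert,
      Fin.val_succ, Fin.coe_castSucc, Nat.lt_succ_iff_lt_or_eq]
    constructor
    · rintro (h | h)
      · exact Or.inr h
      · exact Or.inl (Fin.ext h)
    · rintro (h | h)
      · exact Or.inr (by rw [h])
      · exact Or.inl h
  have hnot : j ∉ Finset.univ.filter fun p : Fin m => (p : ℕ) < (j.castSucc : ℕ) := by
    simp
  rw [thetaOf, thetaOf, hset, Finset.sum_insert hnot]
  ring

private lemma thetaOf_eq {m : ℕ} (θ : Fin (m + 1) → ℝ) (h0 : θ 0 = 0) :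
    θ = thetaOf (fun p => θ p.succ - θ p.castSucc) := by
  funext j
  induction j using Fin.induction with
  | zero => rw [h0, thetaOf_zero]
  | succ i ih =>
      have := thetaOf_diff (fun p => θ p.succ - θ p.castSucc) i
      have h2 : thetaOf (fun p => θ p.succ - θ p.castSucc) i.succ
          = thetaOf (fun p => θ p.succ - θ p.castSucc) i.castSucc
            + (θ i.succ - θ i.castSucc) := by linarith
      rw [h2, ← ih]
      ring

private lemma sum_theta_diff {m : ℕ} (θ : Fin (m + 1) → ℝ) :
    ∑ p : Fin m, (θ p.succ - θ p.castSucc) = θ (Fin.last m) - θ 0 := by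
  set g : ℕ → ℝ := fun i => if h : i < m + 1 then θ ⟨i, h⟩ else 0 with hg
  have h1 : ∀ p : Fin m, θ p.succ - θ p.castSucc = g ((p : ℕ) + 1) - g (p : ℕ) := by
    intro p
    rw [hg]
    simp only []
    rw [dif_pos (by omega : (p : ℕ) + 1 < m + 1), dif_pos (by omega : (p : ℕ) < m + 1)]
    congr 1
  have h2 : ∑ p : Fin m, (θ p.succ - θ p.castSucc)
      = ∑ i ∈ Finset.range m, (g (i + 1) - g i) := by
    rw [← Fin.sum_univ_eq_sum_range (fun i => g (i + 1) - g i) m]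
    exact Finset.sum_congr rfl fun p _ => h1 p
  rw [h2, Finset.sum_range_sub g m, hg]
  simp only []
  rw [dif_pos (by omega : m < m + 1), dif_pos (by omega : 0 < m + 1)]
  rfl

open Finset in
/-- Lemma 7.3: given positive reals `a_1, …, a_m` satisfying the strict polygon
inequality, there is a unique tuple `0 = θ_1 < θ_2 < ⋯ < θ_m < π` (with
`θ_{m+1} := π`) such that `sin(θ_{p+1} − θ_p)·a_q = sin(θ_{q+1} − θ_q)·a_p` for
all `p, q`.  Here `θ : Fin (m+1) → ℝ` records `(θ_1, …, θ_{m+1})`. -/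
theorem inscribed_polygon_unique (m : ℕ) (hm : 1 ≤ m) (a : Fin m → ℝ)
    (hpos : ∀ p, 0 < a p)
    (hpoly : ∀ p, a p < ∑ q ∈ Finset.univ.erase p, a q) :
    ∃! θ : Fin (m + 1) → ℝ,
      θ 0 = 0 ∧ θ (Fin.last m) = Real.pi ∧ StrictMono θ ∧
      ∀ p q : Fin m,
        Real.sin (θ p.succ - θ p.castSucc) * a q =
          Real.sin (θ q.succ - θ q.castSucc) * a p := by
  classical
  have hpi := Real.pi_pos
  -- `m ≥ 3`
  have hm3 : 3 ≤ m := by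
    by_contra hc
    push_neg at hc
    interval_cases m
    · have h := hpoly 0
      simp at h
      linarith [hpos 0]
    · have h0 := hpoly 0
      have h1 := hpoly 1
      have e0 : (Finset.univ.erase (0 : Fin 2)) = {1} := by decide
      have e1 : (Finset.univ.erase (1 : Fin 2)) = {0} := by decide
      rw [e0, Finset.sum_singleton] at h0
      rw [e1, Finset.sum_singleton] at h1
      linarith
  -- maximal side
  obtain ⟨M, -, hM⟩ := Finset.exists_max_image (Finset.univ : Finset (Fin m)) a
    ⟨⟨0, by omega⟩, Finset.mem_univ _⟩
  have hMpos : 0 < a M := hpos M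
  have hale : ∀ p, a p ≤ a M := fun p => hM p (Finset.mem_univ p)
  set r : Fin m → ℝ := fun p => a p / a M with hrdef
  have hrpos : ∀ p, 0 < r p := fun p => div_pos (hpos p) hMpos
  have hrle : ∀ p, r p ≤ 1 := fun p => (div_le_one hMpos).2 (hale p)
  set k : ℝ → ℝ := fun u => ∑ p ∈ Finset.univ.erase M, Real.arcsin (r p * Real.sin u)
    with hkdef
  clear_value k
  have hkcont : Continuous k := by
    rw [hkdef]
    apply continuous_finset_sum
    intro p _
    exact Real.continuous_arcsin.comp (continuous_const.mul Real.continuous_sin)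
  have hk0 : k 0 = 0 := by simp [hkdef]
  have pi2pos : 0 < Real.pi / 2 := by linarith
  have hksym : ∀ v : ℝ, k (Real.pi - v) = k v := by
    intro v
    simp only [hkdef]
    refine Finset.sum_congr rfl fun p _ => ?_
    rw [Real.sin_pi_sub]
  have hkmono : MonotoneOn k (Set.Icc 0 (Real.pi / 2)) := by
    intro x hx y hy hxy
    simp only [hkdef]
    apply Finset.sum_le_sum
    intro p _
    apply Real.monotone_arcsin
    have hs : Real.sin x ≤ Real.sin y :=
      Real.strictMonoOn_sin.monotoneOn ⟨by linarith [hx.1], hx.2⟩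
        ⟨by linarith [hy.1], hy.2⟩ hxy
    exact mul_le_mul_of_nonneg_left hs (hrpos p).le
  -- concavity of k
  have hkconc : ConcaveOn ℝ (Set.Icc 0 (Real.pi / 2)) k := by
    rw [hkdef]
    have : ∀ t : Finset (Fin m), ConcaveOn ℝ (Set.Icc 0 (Real.pi / 2))
        (fun u => ∑ p ∈ t, Real.arcsin (r p * Real.sin u)) := by
      intro t
      induction t using Finset.induction_on with
      | empty => simpa using concaveOn_const (0 : ℝ) (convex_Icc _ _)
      | @insert x t' hnot ih =>
          have h1 := arcsinSin_concave' (hrpos x).le (hrle x)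
          have := h1.add ih
          refine this.congr ?_
          intro u _
          simp [Finset.sum_insert hnot]
    exact this _
  have hconv : ConvexOn ℝ (Set.Icc 0 (Real.pi / 2)) (fun u => u - k u) := by
    have h1 : ConvexOn ℝ (Set.Icc 0 (Real.pi / 2)) (fun u : ℝ => u) :=
      (convexOn_id (convex_Icc _ _))
    exact h1.sub hkconc
  -- polygon inequality in terms of r
  have hrho : 1 < ∑ p ∈ Finset.univ.erase M, r p := by
    have h := hpoly M
    have : ∑ p ∈ Finset.univ.erase M, r p = (∑ p ∈ Finset.univ.erase M, a p) / a M := by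
      rw [hrdef, Finset.sum_div]
    rw [this, lt_div_iff₀ hMpos, one_mul]
    exact h
  -- lower bound for k
  have hk_lb : ∀ u : ℝ, 0 ≤ u → u ≤ Real.pi / 2 →
      (∑ p ∈ Finset.univ.erase M, r p) * Real.sin u ≤ k u := by
    intro u h0 h2
    simp only [hkdef]
    rw [Finset.sum_mul]
    apply Finset.sum_le_sum
    intro p _
    have hsn : 0 ≤ Real.sin u := Real.sin_nonneg_of_nonneg_of_le_pi h0 (by linarith)
    have hs1 : Real.sin u ≤ 1 := Real.sin_le_one u
    have hx0 : 0 ≤ r p * Real.sin u := mul_nonneg (hrpos p).le hsn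
    have hx1 : r p * Real.sin u ≤ 1 := by
      calc r p * Real.sin u ≤ 1 * 1 := mul_le_mul (hrle p) hs1 hsn zero_le_one
        _ = 1 := one_mul 1
    nth_rewrite 1 [← Real.sin_arcsin (by linarith) hx1]
    rcases eq_or_lt_of_le (Real.arcsin_nonneg.2 hx0) with h | h
    · rw [← h]; simp
    · exact (Real.sin_lt h).le
  -- small-w negativity
  have hsmall : ∀ u : ℝ, 0 < u → u ≤ Real.pi / 2 → ∃ w, 0 < w ∧ w < u ∧ w - k w < 0 := by
    intro u hu hu2
    set ρ := ∑ p ∈ Finset.univ.erase M, r p with hρ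
    have hρ1 : 1 < ρ := hrho
    have hρ0 : 0 < ρ := by linarith
    set w := min (min (u / 2) 1) (Real.sqrt ((ρ - 1) / ρ)) with hw
    have hw0 : 0 < w := by
      apply lt_min (lt_min (by linarith) one_pos)
      exact Real.sqrt_pos.2 (div_pos (by linarith) hρ0)
    have hwu : w < u := lt_of_le_of_lt (le_trans (min_le_left _ _) (min_le_left _ _))
      (by linarith)
    have hw1 : w ≤ 1 := le_trans (min_le_left _ _) (min_le_right _ _)
    have hwsq : w ^ 2 ≤ (ρ - 1) / ρ := by
      have h1 : w ≤ Real.sqrt ((ρ - 1) / ρ) := min_le_right _ _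
      have h2 : w ^ 2 ≤ Real.sqrt ((ρ - 1) / ρ) ^ 2 := by
        apply pow_le_pow_left₀ hw0.le h1
      rwa [Real.sq_sqrt (div_nonneg (by linarith) hρ0.le)] at h2
    refine ⟨w, hw0, hwu, ?_⟩
    have hlb := hk_lb w hw0.le (by linarith)
    have hcube : w - w ^ 3 / 4 < Real.sin w := by
      have := Real.sin_gt_sub_cube hw0
      linarith [pow_pos hw0 3]
    have hwsq' : ρ * w ^ 2 ≤ ρ - 1 := by
      rw [le_div_iff₀ hρ0] at hwsq
      linarith
    have h3 : w < ρ * (w - w ^ 3 / 4) := by nlinarith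
    have h4 : ρ * (w - w ^ 3 / 4) < ρ * Real.sin w := by
      apply mul_lt_mul_of_pos_left hcube hρ0

    linarith
  -- existence of v with v + k v = Real.pi
  have hGcont : Continuous (fun v : ℝ => v + k v) := continuous_id.add hkcont
  obtain ⟨v, hv0, hvReal.pi, hGv⟩ : ∃ v : ℝ, 0 < v ∧ v < Real.pi ∧ v + k v = Real.pi := by
    by_cases hF : Real.pi ≤ Real.pi / 2 + k (Real.pi / 2)
    · have hIcc : Set.Icc ((0:ℝ) + k 0) (Real.pi / 2 + k (Real.pi / 2)) ⊆
          (fun v : ℝ => v + k v) '' Set.Icc 0 (Real.pi / 2) :=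
        intermediate_value_Icc (le_of_lt pi2pos) hGcont.continuousOn
      have hmem : Real.pi ∈ Set.Icc ((0:ℝ) + k 0) (Real.pi / 2 + k (Real.pi / 2)) := by
        rw [hk0]
        exact ⟨by linarith, hF⟩
      obtain ⟨u₀, hu₀mem, hu₀⟩ := hIcc hmem
      have hu₀' : u₀ + k u₀ = Real.pi := hu₀
      refine ⟨u₀, ?_, by linarith [hu₀mem.2], hu₀'⟩
      rcases eq_or_lt_of_le hu₀mem.1 with h | h
      · exfalso
        rw [← h, hk0] at hu₀'
        linarith
      · exact h
    · push_neg at hF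
      obtain ⟨w, hw0, hwlt, hw⟩ := hsmall (Real.pi / 2) pi2pos le_rfl
      have hcont2 : Continuous (fun u : ℝ => u - k u) := continuous_id.sub hkcont
      have hIcc : Set.Icc (w - k w) (Real.pi / 2 - k (Real.pi / 2)) ⊆
          (fun u : ℝ => u - k u) '' Set.Icc w (Real.pi / 2) :=
        intermediate_value_Icc hwlt.le hcont2.continuousOn
      have hmem : (0:ℝ) ∈ Set.Icc (w - k w) (Real.pi / 2 - k (Real.pi / 2)) := ⟨hw.le, by linarith⟩
      obtain ⟨u, humem, hu⟩ := hIcc hmem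
      have hu' : u - k u = 0 := hu
      have hu0 : 0 < u := lt_of_lt_of_le hw0 humem.1
      have hu2 : u < Real.pi / 2 := by
        rcases eq_or_lt_of_le humem.2 with h | h
        · exfalso
          rw [h] at hu'
          linarith
        · exact h
      refine ⟨Real.pi - u, by linarith, by linarith, ?_⟩
      rw [hksym]
      linarith
  -- uniqueness of v
  have hvuniq : ∀ v', 0 < v' → v' < Real.pi → v' + k v' = Real.pi → v' = v := by
    have key : ∀ v₁ v₂ : ℝ, 0 < v₁ → v₂ < Real.pi → v₁ < v₂ →
        v₁ + k v₁ = Real.pi → v₂ + k v₂ = Real.pi → False := by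
      intro v₁ v₂ h1 h4 hlt g1 g2
      by_cases hc2 : v₂ ≤ Real.pi / 2
      · have hmono := hkmono (⟨h1.le, by linarith⟩ : v₁ ∈ Set.Icc 0 (Real.pi/2))
          (⟨by linarith, hc2⟩ : v₂ ∈ Set.Icc 0 (Real.pi/2)) hlt.le
        linarith
      · push_neg at hc2
        have hu₂0 : 0 < Real.pi - v₂ := by linarith
        have hu₂2 : Real.pi - v₂ < Real.pi / 2 := by linarith
        have hhu₂ : (Real.pi - v₂) - k (Real.pi - v₂) = 0 := by
          rw [hksym]
          linarith
        obtain ⟨w, hw0, hwlt, hww⟩ := hsmall (Real.pi - v₂) hu₂0 (by linarith)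
        have hwmem : w ∈ Set.Icc (0:ℝ) (Real.pi/2) := ⟨hw0.le, by linarith⟩
        have hww' : (fun u : ℝ => u - k u) w < 0 := hww
        by_cases hc1 : v₁ ≤ Real.pi / 2
        · have hmono := hkmono (⟨h1.le, hc1⟩ : v₁ ∈ Set.Icc 0 (Real.pi/2))
            (⟨pi2pos.le, le_rfl⟩ : Real.pi/2 ∈ Set.Icc 0 (Real.pi/2)) hc1
          have hReal.pi2 : (fun u : ℝ => u - k u) (Real.pi/2) ≤ 0 := by
            simp only []
            linarith
          have h5 := convex_three' hconv hwmem
            (⟨pi2pos.le, le_rfl⟩ : Real.pi/2 ∈ Set.Icc 0 (Real.pi/2)) hwlt hu₂2 hww' hReal.pi2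
          linarith
        · push_neg at hc1
          have hu₁2 : Real.pi - v₁ < Real.pi / 2 := by linarith
          have hu₁mem : Real.pi - v₁ ∈ Set.Icc (0:ℝ) (Real.pi/2) := ⟨by linarith, hu₁2.le⟩
          have hhu₁ : (fun u : ℝ => u - k u) (Real.pi - v₁) ≤ 0 := by
            simp only []
            rw [hksym]
            linarith
          have hlt2 : Real.pi - v₂ < Real.pi - v₁ := by linarith
          have h5 := convex_three' hconv hwmem hu₁mem hwlt hlt2 hww' hhu₁
          linarith
    intro v' h0' hReal.pi' hGv'
    rcases lt_trichotomy v' v with h | h | h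
    · exact (key v' v h0' hvReal.pi h hGv' hGv).elim
    · exact h
    · exact (key v v' hv0 hReal.pi' h hGv hGv').elim
  -- the canonical side angles
  have hsinv : 0 < Real.sin v := Real.sin_pos_of_pos_of_lt_pi hv0 hvReal.pi
  have hsinv1 : Real.sin v ≤ 1 := Real.sin_le_one v
  set Δ₀ : Fin m → ℝ := fun p => if p = M then v else Real.arcsin (r p * Real.sin v)
    with hΔ₀def
  clear_value Δ₀
  have hΔ₀M : Δ₀ M = v := by simp [hΔ₀def]
  have hΔ₀pos : ∀ p, 0 < Δ₀ p := by
    intro p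
    by_cases hp : p = M
    · rw [hΔ₀def]
      simp only [hp, if_pos rfl]
      exact hv0
    · rw [hΔ₀def]
      simp only [if_neg hp]
      exact Real.arcsin_pos.2 (mul_pos (hrpos p) hsinv)
  have hsinΔ₀ : ∀ p, Real.sin (Δ₀ p) = r p * Real.sin v := by
    intro p
    by_cases hp : p = M
    · subst hp
      rw [hΔ₀M, hrdef]
      simp only []
      rw [div_self hMpos.ne', one_mul]
    · rw [hΔ₀def]
      simp only [if_neg hp]
      apply Real.sin_arcsin
      · have := mul_pos (hrpos p) hsinv
        linarith
      · calc r p * Real.sin v ≤ 1 * 1 :=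
            mul_le_mul (hrle p) hsinv1 hsinv.le zero_le_one
          _ = 1 := one_mul 1
  have hsum₀ : ∑ p, Δ₀ p = Real.pi := by
    rw [← Finset.add_sum_erase _ Δ₀ (Finset.mem_univ M), hΔ₀M]
    have : ∑ p ∈ Finset.univ.erase M, Δ₀ p = k v := by
      simp only [hkdef]
      refine Finset.sum_congr rfl fun p hp => ?_
      rw [hΔ₀def]
      simp only [if_neg (Finset.mem_erase.1 hp).1]
    rw [this]
    exact hGv
  refine ⟨thetaOf Δ₀, ⟨thetaOf_zero Δ₀, ?_, ?_, ?_⟩, ?_⟩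
  · rw [thetaOf_last]
    exact hsum₀
  · rw [Fin.strictMono_iff_lt_succ]
    intro j
    have := thetaOf_diff Δ₀ j
    have h2 := hΔ₀pos j
    linarith
  · intro p q
    rw [thetaOf_diff, thetaOf_diff, hsinΔ₀, hsinΔ₀, hrdef]
    simp only []
    field_simp
  -- uniqueness
  · intro θ' ⟨h0', hlast', hmono', hrel'⟩
    set Δ' : Fin m → ℝ := fun p => θ' p.succ - θ' p.castSucc with hΔ'def
    clear_value Δ'
    have hΔ'pos : ∀ p, 0 < Δ' p := by
      intro p
      rw [hΔ'def]
      exact sub_pos.2 (hmono' (Fin.castSucc_lt_succ : p.castSucc < p.succ))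
    have hsum' : ∑ p, Δ' p = Real.pi := by
      rw [hΔ'def, sum_theta_diff θ', hlast', h0']
      ring
    have hcard1 : 0 < (Finset.univ.erase M).card := by
      rw [Finset.card_erase_of_mem (Finset.mem_univ M), Finset.card_univ, Fintype.card_fin]
      omega
    have hrest : 0 < ∑ p ∈ Finset.univ.erase M, Δ' p :=
      Finset.sum_pos (fun p _ => hΔ'pos p) (Finset.card_pos.mp hcard1)
    have hsplitM : Δ' M + ∑ p ∈ Finset.univ.erase M, Δ' p = Real.pi := by
      rw [Finset.add_sum_erase _ Δ' (Finset.mem_univ M)]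
      exact hsum'
    have hΔ'Mlt : Δ' M < Real.pi := by linarith
    have hsinM : 0 < Real.sin (Δ' M) :=
      Real.sin_pos_of_pos_of_lt_pi (hΔ'pos M) hΔ'Mlt
    have hsin' : ∀ p, Real.sin (Δ' p) = r p * Real.sin (Δ' M) := by
      intro p
      have h := hrel' p M
      rw [hrdef]
      simp only []
      rw [div_mul_eq_mul_div, eq_div_iff hMpos.ne']
      calc Real.sin (Δ' p) * a M = Real.sin (θ' p.succ - θ' p.castSucc) * a M := by
            rw [hΔ'def]
        _ = Real.sin (θ' M.succ - θ' M.castSucc) * a p := h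
        _ = a p * Real.sin (Δ' M) := by rw [hΔ'def]; ring
    have hacute : ∀ p, p ≠ M → Δ' p < Real.pi / 2 := by
      intro p hpM
      by_contra hge
      push_neg at hge
      have hpmem : p ∈ Finset.univ.erase M := Finset.mem_erase.2 ⟨hpM, Finset.mem_univ p⟩
      have hcard2 : 0 < ((Finset.univ.erase M).erase p).card := by
        rw [Finset.card_erase_of_mem hpmem, Finset.card_erase_of_mem (Finset.mem_univ M),
          Finset.card_univ, Fintype.card_fin]
        omega
      have hrest2 : 0 < ∑ q ∈ (Finset.univ.erase M).erase p, Δ' q :=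
        Finset.sum_pos (fun q _ => hΔ'pos q) (Finset.card_pos.mp hcard2)
      have hsplit2 : Δ' p + ∑ q ∈ (Finset.univ.erase M).erase p, Δ' q
          = ∑ q ∈ Finset.univ.erase M, Δ' q := Finset.add_sum_erase _ Δ' hpmem
      have hΔ'plt : Δ' p < Real.pi := by linarith [hΔ'pos M, hrest2, hsplitM, hsplit2]
      have hclaim : Real.pi - Δ' p ≤ Δ' M := by
        by_cases h : Real.pi / 2 ≤ Δ' M
        · linarith [hge, h]
        · push_neg at h
          have h1 : Real.sin (Δ' p) ≤ Real.sin (Δ' M) := by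
            rw [hsin' p]
            nlinarith [hrle p, hrpos p]
          have h2 : Real.sin (Real.pi - Δ' p) ≤ Real.sin (Δ' M) := by
            rw [Real.sin_pi_sub]
            exact h1
          have hmem1 : Real.pi - Δ' p ∈ Set.Icc (-(Real.pi/2)) (Real.pi/2) :=
            ⟨by linarith, by linarith⟩
          have hmem2 : Δ' M ∈ Set.Icc (-(Real.pi/2)) (Real.pi/2) :=
            ⟨by linarith [hΔ'pos M], h.le⟩
          exact (Real.strictMonoOn_sin.le_iff_le hmem1 hmem2).1 h2
      linarith
    have hΔ'eq : ∀ p, p ≠ M → Δ' p = Real.arcsin (r p * Real.sin (Δ' M)) := by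
      intro p hpM
      rw [← hsin' p, Real.arcsin_sin (by linarith [hΔ'pos p]) (hacute p hpM).le]
    have hGv' : Δ' M + k (Δ' M) = Real.pi := by
      have : ∑ p ∈ Finset.univ.erase M, Δ' p = k (Δ' M) := by
        simp only [hkdef]
        refine Finset.sum_congr rfl fun p hp => ?_
        exact hΔ'eq p (Finset.mem_erase.1 hp).1
      rw [← this]
      exact hsplitM
    have hvM : Δ' M = v := hvuniq (Δ' M) (hΔ'pos M) hΔ'Mlt hGv'
    have hΔfin : Δ' = Δ₀ := by
      funext p
      by_cases hp : p = M
      · rw [hp, hΔ₀M, hvM]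
      · rw [hΔ'eq p hp, hvM, hΔ₀def]
        simp only [if_neg hp]
    have := thetaOf_eq θ' h0'
    rw [this, ← hΔ'def, hΔfin]
end

section
/- Let k ≥ 1 and n ≥ 1 be integers and let c = (c_{p,r}) be a complex k × n matrix. Define g : ℝ → ℂⁿ by g_r(t) = Σ_{p=1}^{k} c_{p,r}·exp(i(2p − k − 1)t) for r ∈ [n]. Then for any real numbers 0 ≤ s_1 < s_2 < … < s_k < π, the ℂ-linear span of the vectors g(s_1), …, g(s_k) equals the ℂ-linear span of the rows of c; in particular it equals the ℂ-linear span of the whole image {g(t) : t ∈ ℝ}. -/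
/-- The Vandermonde-type lemma underlying Propositions 4.4 and 4.5: if
`g_r(t) = Σ_{p=1}^{k} c_{p,r}·exp(i(2p − k − 1)t)`, then for any
`0 ≤ s_1 < s_2 < ⋯ < s_k < π` the span of `g(s_1), …, g(s_k)` equals the span of
the rows of `c`, and in particular equals the span of the whole image of `g`. -/
theorem trig_curve_span (k n : ℕ) (hk : 1 ≤ k) (hn : 1 ≤ n)
    (c : Fin k → Fin n → ℂ) (g : ℝ → Fin n → ℂ)
    (hg : ∀ t : ℝ, ∀ r : Fin n,
      g t r = ∑ p : Fin k,
        c p r * Complex.exp (Complex.I * (2 * ((p : ℕ) : ℂ) + 1 - (k : ℂ)) * (t : ℂ)))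
    (s : Fin k → ℝ) (hs0 : ∀ j, 0 ≤ s j) (hmono : StrictMono s)
    (hsπ : ∀ j, s j < Real.pi) :
    Submodule.span ℂ (Set.range fun j => g (s j)) = Submodule.span ℂ (Set.range c) ∧
    Submodule.span ℂ (Set.range fun j => g (s j)) = Submodule.span ℂ (Set.range g) := by
  classical
  set A : Matrix (Fin k) (Fin k) ℂ := fun j p =>
    Complex.exp (Complex.I * (2 * ((p : ℕ) : ℂ) + 1 - (k : ℂ)) * ((s j : ℝ) : ℂ)) with hA
  -- the points exp(2 i s_j) are distinct
  have hvinj : Function.Injective (fun j => Complex.exp (2 * Complex.I * ((s j : ℝ) : ℂ))) := by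
    intro i j h
    by_contra hij
    rw [Complex.exp_eq_exp_iff_exists_int] at h
    obtain ⟨m, hm⟩ := h
    have h2 : (2 : ℂ) * Complex.I ≠ 0 :=
      mul_ne_zero two_ne_zero Complex.I_ne_zero
    have hm' : ((s i : ℝ) : ℂ) = ((s j + m * Real.pi : ℝ) : ℂ) := by
      have key : 2 * Complex.I * ((s i : ℝ) : ℂ) =
          2 * Complex.I * (((s j : ℝ) : ℂ) + (m : ℂ) * (Real.pi : ℂ)) := by
        linear_combination hm
      have := mul_left_cancel₀ h2 key
      push_cast
      linear_combination this
    have hre : s i = s j + m * Real.pi := by exact_mod_cast hm'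
    have hlt : |s i - s j| < Real.pi := by
      rw [abs_sub_lt_iff]
      constructor <;> nlinarith [hs0 i, hs0 j, hsπ i, hsπ j]
    have hmπ : (m : ℝ) * Real.pi = s i - s j := by linarith
    have hm0 : m = 0 := by
      by_contra hm0
      have h1le : (1 : ℝ) ≤ |(m : ℝ)| := by
        exact_mod_cast Int.one_le_abs (by exact_mod_cast hm0)
      have : Real.pi ≤ |(m : ℝ) * Real.pi| := by
        rw [abs_mul, abs_of_pos Real.pi_pos]
        nlinarith [Real.pi_pos]
      rw [hmπ] at this
      linarith
    rw [hm0] at hre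
    simp at hre
    exact hij (hmono.injective (by linarith))
  have hdet : A.det ≠ 0 := by
    have hA' : A = Matrix.diagonal (fun j => Complex.exp (Complex.I * (1 - (k : ℂ)) * ((s j : ℝ) : ℂ))) *
        Matrix.vandermonde (fun j => Complex.exp (2 * Complex.I * ((s j : ℝ) : ℂ))) := by
      ext j p
      rw [Matrix.diagonal_mul, Matrix.vandermonde]
      simp only [hA, Matrix.of_apply]
      rw [← Complex.exp_nat_mul, ← Complex.exp_add]
      congr 1
      ring
    rw [hA', Matrix.det_mul, Matrix.det_diagonal, Matrix.det_vandermonde]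
    apply mul_ne_zero
    · exact Finset.prod_ne_zero_iff.mpr fun j _ => Complex.exp_ne_zero _
    · refine Finset.prod_ne_zero_iff.mpr fun i _ => Finset.prod_ne_zero_iff.mpr fun j hj => ?_
      rw [Finset.mem_Ioi] at hj
      exact sub_ne_zero.mpr fun h => hj.ne' (hvinj h)
  have hAd : IsUnit A.det := isUnit_iff_ne_zero.mpr hdet
  set B := A⁻¹ with hB
  have hBA : B * A = 1 := Matrix.nonsing_inv_mul A hAd
  -- g (s j) as combination of rows of c
  have hgs : ∀ j, g (s j) = ∑ p, A j p • c p := by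
    intro j
    funext r
    rw [hg]
    simp only [Finset.sum_apply, Pi.smul_apply, smul_eq_mul]
    exact Finset.sum_congr rfl fun p _ => mul_comm _ _
  have hgt : ∀ t : ℝ, g t = ∑ p : Fin k, Complex.exp (Complex.I * (2 * ((p : ℕ) : ℂ) + 1 - (k : ℂ)) * (t : ℂ)) • c p := by
    intro t
    funext r
    rw [hg]
    simp only [Finset.sum_apply, Pi.smul_apply, smul_eq_mul]
    exact Finset.sum_congr rfl fun p _ => mul_comm _ _
  -- rows of c as combinations of the g (s j)
  have hcs : ∀ p, c p = ∑ j, B p j • g (s j) := by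
    intro p
    funext r
    simp only [Finset.sum_apply, Pi.smul_apply, smul_eq_mul]
    have : ∀ j, B p j * g (s j) r = ∑ q, B p j * (A j q * c q r) := by
      intro j
      rw [hg]
      rw [Finset.mul_sum]
      exact Finset.sum_congr rfl fun q _ => by rw [mul_comm (c q r)]
    rw [Finset.sum_congr rfl fun j _ => this j, Finset.sum_comm]
    have : ∀ q, (∑ j, B p j * (A j q * c q r)) = (B * A) p q * c q r := by
      intro q
      rw [Matrix.mul_apply, Finset.sum_mul]
      exact Finset.sum_congr rfl fun j _ => by ring
    rw [Finset.sum_congr rfl fun q _ => this q, hBA]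
    simp [Matrix.one_apply]
  have h1 : Submodule.span ℂ (Set.range fun j => g (s j)) ≤ Submodule.span ℂ (Set.range c) := by
    rw [Submodule.span_le]
    rintro _ ⟨j, rfl⟩
    dsimp only
    rw [hgs j]
    exact Submodule.sum_mem _ fun p _ =>
      Submodule.smul_mem _ _ (Submodule.subset_span ⟨p, rfl⟩)
  have h2 : Submodule.span ℂ (Set.range c) ≤ Submodule.span ℂ (Set.range fun j => g (s j)) := by
    rw [Submodule.span_le]
    rintro _ ⟨p, rfl⟩
    rw [hcs p]
    exact Submodule.sum_mem _ fun j _ =>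
      Submodule.smul_mem _ _ (Submodule.subset_span ⟨j, rfl⟩)
  have hfirst : Submodule.span ℂ (Set.range fun j => g (s j)) = Submodule.span ℂ (Set.range c) :=
    le_antisymm h1 h2
  have h3 : Submodule.span ℂ (Set.range fun j => g (s j)) ≤ Submodule.span ℂ (Set.range g) := by
    rw [Submodule.span_le]
    rintro _ ⟨j, rfl⟩
    exact Submodule.subset_span ⟨s j, rfl⟩
  have h4 : Submodule.span ℂ (Set.range g) ≤ Submodule.span ℂ (Set.range c) := by
    rw [Submodule.span_le]
    rintro _ ⟨t, rfl⟩
    rw [hgt t]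
    exact Submodule.sum_mem _ fun p _ =>
      Submodule.smul_mem _ _ (Submodule.subset_span ⟨p, rfl⟩)
  exact ⟨hfirst, le_antisymm h3 (h4.trans hfirst.ge)⟩
end

section
/- Let f be a (k,n)-bounded affine permutation that is loopless and coloopless. Then there exists r ∈ [n] such that f(r) < f(r+1); consequently r < r + 1 ≤ f(r) < f(r+1) ≤ r + n, i.e. f has a bridge at r. -/
/-- A `(k,n)`-bounded affine permutation: a bijection `f : ℤ → ℤ` with
`f(j+n) = f(j)+n`, `Σ_{j=1}^{n} (f(j)−j) = kn`, and `j ≤ f(j) ≤ j+n`. -/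
def IsBoundedAffinePermutation (k n : ℕ) (f : ℤ → ℤ) : Prop :=
  Function.Bijective f ∧
  (∀ j : ℤ, f (j + n) = f j + n) ∧
  (∑ j ∈ Finset.Icc (1 : ℤ) (n : ℤ), (f j - j)) = (k : ℤ) * n ∧
  ∀ j : ℤ, j ≤ f j ∧ f j ≤ j + n

/-- Section 2.3: every loopless and coloopless bounded affine permutation has a
bridge at some `r ∈ [n]`, i.e. `r < r+1 ≤ f(r) < f(r+1) ≤ r+n`. -/
theorem exists_bridge (k n : ℕ) (f : ℤ → ℤ)
    (hf : IsBoundedAffinePermutation k n f)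
    (hloopless : ∀ j : ℤ, j < f j)
    (hcoloopless : ∀ j : ℤ, f j < j + n) :
    ∃ r : ℤ, 1 ≤ r ∧ r ≤ n ∧ r + 1 ≤ f r ∧ f r < f (r + 1) ∧ f (r + 1) ≤ r + n := by
  obtain ⟨hbij, hshift, hsum, hbd⟩ := hf
  have hn : 0 < (n : ℤ) := lt_trans (hloopless 0) (by simpa using hcoloopless 0)
  by_contra hcon
  push_neg at hcon
  have key : ∀ r : ℤ, 1 ≤ r → r ≤ n → f (r + 1) ≤ f r := by
    intro r h1 h2
    by_contra hlt
    push_neg at hlt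
    have h3 : r + 1 ≤ f r := hloopless r
    have h4 : f (r + 1) ≤ r + n := by
      have := hcoloopless (r + 1)
      omega
    have := hcon r h1 h2 h3 hlt
    omega
  have chain : ∀ m : ℕ, (m : ℤ) ≤ n → f (1 + m) ≤ f 1 := by
    intro m
    induction m with
    | zero => simp
    | succ m ih =>
      intro hm
      push_cast at hm ⊢
      have h1 : f (1 + m + 1) ≤ f (1 + m) := by
        apply key (1 + m) (by omega) (by omega)
      have h2 : f (1 + (m : ℤ)) ≤ f 1 := ih (by omega)
      calc f (1 + (m : ℤ) + 1) ≤ f (1 + m) := h1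
        _ ≤ f 1 := h2
  have hfin : f (1 + n) ≤ f 1 := chain n le_rfl
  have := hshift 1
  omega
end

section
/- Let f be a (k,n)-bounded affine permutation and let q ∈ ℤ. Then the set Ĩ_q := {f(p) : p ∈ ℤ, p < q ≤ f(p)} is contained in the interval [q, q+n−1] and has exactly k elements (so its reduction modulo n consists of k distinct residues). Likewise, the set Ĩ'_q := {p ∈ ℤ : p ≤ q < f(p)} has exactly k elements. -/
namespace GrassmannNecklaceAux

/-- The counting function: number of `p ∈ [q-n, q-1]` with `f p ≥ q`. -/
noncomputable def g (n : ℕ) (f : ℤ → ℤ) (q : ℤ) : ℕ :=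
  ((Finset.Icc (q - (n : ℤ)) (q - 1)).filter (fun p => q ≤ f p)).card

lemma g_succ {n : ℕ} {f : ℤ → ℤ} (hn : 1 ≤ n)
    (hinj : Function.Injective f) (hsurj : Function.Surjective f)
    (hbd : ∀ j : ℤ, j ≤ f j ∧ f j ≤ j + n) (q : ℤ) :
    g n f (q + 1) = g n f q := by
  have hn1 : (1 : ℤ) ≤ (n : ℤ) := by exact_mod_cast hn
  classical
  -- the common core
  set C := ((Finset.Icc (q + 1 - (n : ℤ)) (q - 1)).filter (fun p => q + 1 ≤ f p)).card with hC
  -- g (q+1)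
  have e1 : g n f (q + 1)
      = C + (if q + 1 ≤ f q then 1 else 0) := by
    unfold g
    have : Finset.Icc (q + 1 - (n : ℤ)) (q + 1 - 1)
        = insert q (Finset.Icc (q + 1 - (n : ℤ)) (q - 1)) := by
      ext x
      simp only [Finset.mem_Icc, Finset.mem_insert]
      omega
    rw [this, Finset.filter_insert]
    by_cases h : q + 1 ≤ f q
    · rw [if_pos h, Finset.card_insert_of_notMem, if_pos h]
      simp only [Finset.mem_filter, Finset.mem_Icc]
      omega
    · rw [if_neg h, if_neg h, Nat.add_zero]
  -- in g q, the part with f p ≥ q + 1 equals C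
  have e2 : ((Finset.Icc (q - (n : ℤ)) (q - 1)).filter (fun p => q + 1 ≤ f p)).card = C := by
    congr 1
    ext p
    simp only [Finset.mem_filter, Finset.mem_Icc]
    constructor
    · rintro ⟨⟨h1, h2⟩, h3⟩
      refine ⟨⟨?_, h2⟩, h3⟩
      rcases eq_or_lt_of_le h1 with h | h
      · exfalso; have := (hbd p).2; omega
      · omega
    · rintro ⟨⟨h1, h2⟩, h3⟩; exact ⟨⟨by omega, h2⟩, h3⟩
  -- split g q
  have e3 : g n f q = ((Finset.Icc (q - (n : ℤ)) (q - 1)).filter (fun p => f p = q)).card + C := by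
    unfold g
    rw [← e2, ← Finset.card_union_of_disjoint]
    · congr 1
      rw [← Finset.filter_or]
      apply Finset.filter_congr
      intro x _
      constructor
      · intro h; omega
      · intro h; omega
    · rw [Finset.disjoint_left]
      intro a ha hb
      simp only [Finset.mem_filter] at ha hb
      omega
  by_cases hq : f q = q
  · -- no preimage of q strictly below q
    have : ((Finset.Icc (q - (n : ℤ)) (q - 1)).filter (fun p => f p = q)).card = 0 := by
      rw [Finset.card_eq_zero]
      ext p
      simp only [Finset.mem_filter, Finset.mem_Icc, Finset.notMem_empty, iff_false, not_and]
      rintro ⟨h1, h2⟩ h3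
      have : p = q := hinj (by rw [h3, hq])
      omega
    rw [e1, e3, this, if_neg (by omega)]
    omega
  · obtain ⟨p0, hp0⟩ := hsurj q
    have hp0q : p0 ≠ q := fun h => hq (h ▸ hp0)
    have hb1 := (hbd p0).1
    have hb2 := (hbd p0).2
    have : ((Finset.Icc (q - (n : ℤ)) (q - 1)).filter (fun p => f p = q)).card = 1 := by
      rw [Finset.card_eq_one]
      refine ⟨p0, ?_⟩
      ext p
      simp only [Finset.mem_filter, Finset.mem_Icc, Finset.mem_singleton]
      constructor
      · rintro ⟨_, h3⟩
        exact hinj (by rw [h3, hp0])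
      · rintro rfl
        exact ⟨⟨by omega, by omega⟩, hp0⟩
    have hfq : q + 1 ≤ f q := by
      have := (hbd q).1
      omega
    rw [e1, e3, this, if_pos hfq]
    omega

lemma g_const {n : ℕ} {f : ℤ → ℤ} (hn : 1 ≤ n)
    (hinj : Function.Injective f) (hsurj : Function.Surjective f)
    (hbd : ∀ j : ℤ, j ≤ f j ∧ f j ≤ j + n) (q : ℤ) :
    g n f q = g n f 1 := by
  have key : ∀ q : ℤ, g n f q = g n f 0 := by
    intro q
    induction q using Int.induction_on with
    | zero => rfl
    | succ i ih => rw [g_succ hn hinj hsurj hbd, ih]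
    | pred i ih =>
        rw [← ih]
        have := g_succ hn hinj hsurj hbd (-(i:ℤ) - 1)
        rw [show -(i:ℤ) - 1 + 1 = -(i:ℤ) by ring] at this
        exact this.symm
  rw [key q, ← key 1]


lemma sum_g {n : ℕ} {f : ℤ → ℤ} (hn : 1 ≤ n)
    (hper : ∀ j : ℤ, f (j + n) = f j + n)
    (hbd : ∀ j : ℤ, j ≤ f j ∧ f j ≤ j + n) :
    ∑ q ∈ Finset.Icc (1 : ℤ) (n : ℤ), (g n f q : ℤ)
      = ∑ j ∈ Finset.Icc (1 : ℤ) (n : ℤ), (f j - j) := by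
  classical
  have hn1 : (1 : ℤ) ≤ (n : ℤ) := by exact_mod_cast hn
  -- Step A: rewrite g q as a sum of indicators over a fixed window
  have stepA : ∀ q ∈ Finset.Icc (1 : ℤ) (n : ℤ),
      (g n f q : ℤ) = ∑ p ∈ Finset.Icc (1 - (n : ℤ)) (2 * n),
        (if p < q ∧ q ≤ f p then (1 : ℤ) else 0) := by
    intro q hq
    rw [Finset.mem_Icc] at hq
    unfold g
    rw [Finset.card_filter]
    push_cast
    rw [Finset.sum_congr rfl (g := fun p => if p < q ∧ q ≤ f p then (1:ℤ) else 0)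
      (fun p hp => by
        rw [Finset.mem_Icc] at hp
        exact if_congr (by constructor <;> intro h <;> [exact ⟨by omega, h⟩; exact h.2]) rfl rfl)]
    apply Finset.sum_subset
    · intro p hp
      rw [Finset.mem_Icc] at hp ⊢
      omega
    · intro p hp hnp
      rw [Finset.mem_Icc] at hp hnp
      rw [if_neg]
      rintro ⟨h1, h2⟩
      have := (hbd p).2
      omega
  rw [Finset.sum_congr rfl stepA, Finset.sum_comm]
  -- Step C: compute the inner sum
  have stepC : ∀ p : ℤ, ∑ q ∈ Finset.Icc (1 : ℤ) (n : ℤ),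
      (if p < q ∧ q ≤ f p then (1 : ℤ) else 0)
      = (min (f p) n + 1 - max (p + 1) 1) ⊔ 0 := by
    intro p
    rw [Finset.sum_boole]
    have : (Finset.Icc (1 : ℤ) (n : ℤ)).filter (fun q => p < q ∧ q ≤ f p)
        = Finset.Icc (max (p + 1) 1) (min (f p) n) := by
      ext x
      simp only [Finset.mem_filter, Finset.mem_Icc]
      omega
    rw [this, Int.card_Icc, Int.toNat_eq_max]
  rw [Finset.sum_congr rfl (fun p _ => stepC p)]
  -- Step D: split the window
  have hIcc : Finset.Icc (1 - (n : ℤ)) (2 * n) = Finset.Ioc (-(n : ℤ)) (2 * n) := by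
    ext x; simp only [Finset.mem_Icc, Finset.mem_Ioc]; omega
  have hsplit1 : Finset.Ioc (-(n : ℤ)) (2 * n)
      = Finset.Ioc (-(n : ℤ)) 0 ∪ Finset.Ioc (0 : ℤ) (2 * n) :=
    (Finset.Ioc_union_Ioc_eq_Ioc (by omega) (by omega)).symm
  have hsplit2 : Finset.Ioc (0 : ℤ) (2 * n)
      = Finset.Ioc (0 : ℤ) (n : ℤ) ∪ Finset.Ioc (n : ℤ) (2 * n) :=
    (Finset.Ioc_union_Ioc_eq_Ioc (by omega) (by omega)).symm
  have hdisj1 : Disjoint (Finset.Ioc (-(n : ℤ)) 0) (Finset.Ioc (0 : ℤ) (2 * n)) := by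
    rw [Finset.disjoint_left]; intro a h1 h2
    rw [Finset.mem_Ioc] at h1 h2; omega
  have hdisj2 : Disjoint (Finset.Ioc (0 : ℤ) (n : ℤ)) (Finset.Ioc (n : ℤ) (2 * n)) := by
    rw [Finset.disjoint_left]; intro a h1 h2
    rw [Finset.mem_Ioc] at h1 h2; omega
  rw [hIcc, hsplit1, Finset.sum_union hdisj1, hsplit2, Finset.sum_union hdisj2]
  -- the top part vanishes
  have htop : ∑ p ∈ Finset.Ioc (n : ℤ) (2 * n),
      ((min (f p) n + 1 - max (p + 1) 1) ⊔ 0) = 0 := by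
    apply Finset.sum_eq_zero
    intro p hp
    rw [Finset.mem_Ioc] at hp
    have h1 : min (f p) (n : ℤ) ≤ n := min_le_right _ _
    omega
  -- the bottom part equals a sum over (0, n]
  have hbot : ∑ p ∈ Finset.Ioc (-(n : ℤ)) 0,
      ((min (f p) n + 1 - max (p + 1) 1) ⊔ 0)
      = ∑ p ∈ Finset.Ioc (0 : ℤ) (n : ℤ), ((f p - n) ⊔ 0) := by
    apply Finset.sum_nbij' (fun p => p + (n : ℤ)) (fun p => p - (n : ℤ))
    · intro a ha; rw [Finset.mem_Ioc] at ha ⊢; omega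
    · intro a ha; rw [Finset.mem_Ioc] at ha ⊢; omega
    · intro a _; ring
    · intro a _; ring
    · intro a ha
      rw [Finset.mem_Ioc] at ha
      have hfa : f (a + (n : ℤ)) = f a + n := hper a
      have h1 := (hbd a).1
      have h2 := (hbd a).2
      rw [hfa]
      omega
  rw [htop, hbot, add_zero, ← Finset.sum_add_distrib]
  have : Finset.Ioc (0 : ℤ) (n : ℤ) = Finset.Icc (1 : ℤ) (n : ℤ) := by
    ext x; simp only [Finset.mem_Icc, Finset.mem_Ioc]; omega
  rw [this]
  apply Finset.sum_congr rfl
  intro p hp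
  rw [Finset.mem_Icc] at hp
  have h1 := (hbd p).1
  have h2 := (hbd p).2
  omega

end GrassmannNecklaceAux

open GrassmannNecklaceAux in
/-- Grassmann necklaces: for a `(k,n)`-bounded affine permutation `f` and any
`q ∈ ℤ`, the set `Ĩ_q = {f(p) : p < q ≤ f(p)}` is contained in `[q, q+n−1]` and
has exactly `k` elements (so its reduction modulo `n` consists of `k` distinct
residues), and the set `Ĩ'_q = {p : p ≤ q < f(p)}` also has exactly `k`
elements. -/
theorem grassmann_necklace_card (k n : ℕ) (hkn : k ≤ n) (f : ℤ → ℤ)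
    (hf : IsBoundedAffinePermutation k n f) (q : ℤ) :
    ({m : ℤ | ∃ p : ℤ, p < q ∧ q ≤ f p ∧ f p = m} ⊆ Set.Icc q (q + n - 1)) ∧
    Set.ncard {m : ℤ | ∃ p : ℤ, p < q ∧ q ≤ f p ∧ f p = m} = k ∧
    Set.ncard ((fun m : ℤ => m % (n : ℤ)) ''
      {m : ℤ | ∃ p : ℤ, p < q ∧ q ≤ f p ∧ f p = m}) = k ∧
    Set.ncard {p : ℤ | p ≤ q ∧ q < f p} = k := by
  classical
  obtain ⟨⟨hinj, hsurj⟩, hper, hsum, hbd⟩ := hf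
  rcases Nat.eq_zero_or_pos n with hn0 | hn
  · -- degenerate case n = 0
    subst hn0
    have hk0 : k = 0 := Nat.le_zero.mp hkn
    have hfid : ∀ p : ℤ, f p = p := fun p =>
      le_antisymm (by have := (hbd p).2; omega) (hbd p).1
    have hE : {m : ℤ | ∃ p : ℤ, p < q ∧ q ≤ f p ∧ f p = m} = ∅ := by
      apply Set.eq_empty_iff_forall_notMem.mpr
      rintro m ⟨p, h1, h2, h3⟩
      rw [hfid p] at h2; omega
    have hE' : {p : ℤ | p ≤ q ∧ q < f p} = ∅ := by
      apply Set.eq_empty_iff_forall_notMem.mpr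
      rintro p ⟨h1, h2⟩
      rw [hfid p] at h2; omega
    refine ⟨by rw [hE]; exact Set.empty_subset _, ?_, ?_, ?_⟩ <;>
      simp [hE, hE', hk0]
  · -- main case n ≥ 1
    have hn1 : (1 : ℤ) ≤ (n : ℤ) := by exact_mod_cast hn
    set A : ℤ → Finset ℤ :=
      fun r => (Finset.Icc (r - (n : ℤ)) (r - 1)).filter (fun p => r ≤ f p) with hA
    have hcardA : ∀ r : ℤ, (A r).card = g n f r := fun _ => rfl
    have hset : ∀ r : ℤ, {p : ℤ | p < r ∧ r ≤ f p} = ↑(A r) := by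
      intro r
      ext p
      simp only [Set.mem_setOf_eq, hA, Finset.coe_filter, Finset.mem_Icc]
      have := (hbd p).2
      constructor
      · rintro ⟨h1, h2⟩; exact ⟨⟨by omega, by omega⟩, h2⟩
      · rintro ⟨⟨h1, h2⟩, h3⟩; exact ⟨by omega, h3⟩
    -- the counting function is constantly k
    have hgk : ∀ r : ℤ, g n f r = k := by
      have hsg := sum_g hn hper hbd (f := f)
      rw [hsum] at hsg
      have hconst : ∀ r : ℤ, g n f r = g n f 1 := g_const hn hinj hsurj hbd
      rw [Finset.sum_congr rfl (fun r hr => by rw [hconst r]),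
        Finset.sum_const] at hsg
      have hcard : (Finset.Icc (1 : ℤ) (n : ℤ)).card = n := by
        rw [Int.card_Icc]
        omega
      rw [hcard, nsmul_eq_mul] at hsg
      have : (g n f 1 : ℤ) = k := by
        have hne : (n : ℤ) ≠ 0 := by omega
        apply mul_left_cancel₀ hne
        rw [hsg, mul_comm]
      intro r
      rw [hconst r]
      exact_mod_cast this
    -- express the necklace set as an image
    have hEeq : {m : ℤ | ∃ p : ℤ, p < q ∧ q ≤ f p ∧ f p = m}
        = f '' {p : ℤ | p < q ∧ q ≤ f p} := by
      ext m
      constructor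
      · rintro ⟨p, h1, h2, h3⟩; exact ⟨p, ⟨h1, h2⟩, h3⟩
      · rintro ⟨p, ⟨h1, h2⟩, h3⟩; exact ⟨p, h1, h2, h3⟩
    have hsub : {m : ℤ | ∃ p : ℤ, p < q ∧ q ≤ f p ∧ f p = m}
        ⊆ Set.Icc q (q + (n : ℤ) - 1) := by
      rintro m ⟨p, h1, h2, rfl⟩
      have := (hbd p).2
      exact ⟨h2, by omega⟩
    have hEfin : {m : ℤ | ∃ p : ℤ, p < q ∧ q ≤ f p ∧ f p = m} = ↑((A q).image f) :=
      hEeq.trans (by rw [hset q, Finset.coe_image])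
    have hcard1 : Set.ncard {m : ℤ | ∃ p : ℤ, p < q ∧ q ≤ f p ∧ f p = m} = k := by
      rw [hEfin, Set.ncard_coe_finset, Finset.card_image_of_injective _ hinj,
        hcardA, hgk]
    have hinjOn : Set.InjOn (fun m : ℤ => m % (n : ℤ)) ↑((A q).image f) := by
      intro a ha b hb hab
      rw [← hEfin] at ha hb
      obtain ⟨ha1, ha2⟩ := hsub ha
      obtain ⟨hb1, hb2⟩ := hsub hb
      have hdvd : (n : ℤ) ∣ a - b :=
        Int.dvd_of_emod_eq_zero (Int.emod_eq_emod_iff_emod_sub_eq_zero.mp hab)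
      have : a - b = 0 := by
        apply Int.eq_zero_of_abs_lt_dvd hdvd
        rw [abs_lt]
        omega
      omega
    refine ⟨hsub, hcard1, ?_, ?_⟩
    · -- reduction mod n
      rw [hEfin, Set.ncard_image_of_injOn hinjOn, Set.ncard_coe_finset,
        Finset.card_image_of_injective _ hinj, hcardA, hgk]
    · -- the reverse necklace set
      have : {p : ℤ | p ≤ q ∧ q < f p} = {p : ℤ | p < q + 1 ∧ q + 1 ≤ f p} := by
        ext p
        simp only [Set.mem_setOf_eq]
        omega
      rw [this, hset (q + 1), Set.ncard_coe_finset, hcardA, hgk]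
end

section
/- Let n ≥ 1 and let σ be a permutation of [n]. Then there exists a unique bijection f : ℤ → ℤ such that f(p+n) = f(p) + n for all p ∈ ℤ, p < f(p) ≤ p + n for all p ∈ ℤ, and f(p) ≡ σ(p) (mod n) for all p ∈ [n]. Moreover, there is an integer k with 1 ≤ k ≤ n such that Σ_{p=1}^{n} (f(p) − p) = kn; thus f is a loopless (k,n)-bounded affine permutation, and this construction gives a bijection between permutations of [n] and loopless bounded affine permutations. -/
namespace PBAP

/-- The residue map `ℤ → Fin n` under the identification `p ↦ p+1`. -/
def rmap (n : ℕ) (hn : 1 ≤ n) (x : ℤ) : Fin n :=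
  ⟨((x - 1) % (n : ℤ)).toNat, by
    have h0 : (0 : ℤ) < n := by exact_mod_cast hn
    have h1 := Int.emod_nonneg (x - 1) (by omega : (n : ℤ) ≠ 0)
    have h2 := Int.emod_lt_of_pos (x - 1) h0
    omega⟩

lemma rmap_coe {n : ℕ} (hn : 1 ≤ n) (x : ℤ) :
    ((rmap n hn x : ℕ) : ℤ) = (x - 1) % (n : ℤ) := by
  have h0 : (0 : ℤ) < n := by exact_mod_cast hn
  have h1 := Int.emod_nonneg (x - 1) (by omega : (n : ℤ) ≠ 0)
  simp [rmap, Int.toNat_of_nonneg h1]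

lemma rmap_modeq {n : ℕ} (hn : 1 ≤ n) (x : ℤ) :
    x ≡ ((rmap n hn x : ℕ) : ℤ) + 1 [ZMOD (n : ℤ)] := by
  rw [rmap_coe hn]
  have h : (x - 1) % (n : ℤ) ≡ x - 1 [ZMOD (n : ℤ)] :=
    Int.emod_emod_of_dvd _ dvd_rfl
  have := h.add_right 1
  simpa using this.symm

lemma rmap_unique {n : ℕ} (hn : 1 ≤ n) (x : ℤ) (c : Fin n)
    (h : x ≡ ((c : ℕ) : ℤ) + 1 [ZMOD (n : ℤ)]) : rmap n hn x = c := by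
  have h0 : (0 : ℤ) < n := by exact_mod_cast hn
  have h1 : x - 1 ≡ ((c : ℕ) : ℤ) [ZMOD (n : ℤ)] := by
    have := h.sub_right 1
    simpa using this
  have hc0 : (0 : ℤ) ≤ ((c : ℕ) : ℤ) := by positivity
  have hcn : ((c : ℕ) : ℤ) < n := by exact_mod_cast c.isLt
  have h2 : (x - 1) % (n : ℤ) = ((c : ℕ) : ℤ) := by
    have := h1  -- (x-1) % n = c % n
    unfold Int.ModEq at this
    rw [this, Int.emod_eq_of_lt hc0 hcn]
  apply Fin.ext
  have := rmap_coe hn x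
  omega

/-- Uniqueness of a value in a length-`n` window within a congruence class. -/
lemma unique_in_window {n : ℕ} (hn : 1 ≤ n) {x a b : ℤ}
    (ha1 : x < a) (ha2 : a ≤ x + n) (hb1 : x < b) (hb2 : b ≤ x + n)
    (hab : a ≡ b [ZMOD (n : ℤ)]) : a = b := by
  have h0 : (0 : ℤ) < n := by exact_mod_cast hn
  obtain ⟨t, ht⟩ := hab.dvd
  have h1 : (n : ℤ) * t < n * 1 := by rw [mul_one]; omega
  have h2 : (n : ℤ) * (-1) < n * t := by
    have : (n : ℤ) * (-1) = -n := by ring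
    rw [this]; omega
  have t1 := (mul_lt_mul_iff_right₀ h0).mp h1
  have t2 := (mul_lt_mul_iff_right₀ h0).mp h2
  have ht0 : t = 0 := by omega
  rw [ht0, mul_zero] at ht
  omega

/-- Iterated shift. -/
lemma shift {n : ℕ} (f : ℤ ≃ ℤ) (hf : ∀ p : ℤ, f (p + n) = f p + n) (m : ℤ) (p : ℤ) :
    f (p + m * n) = f p + m * n := by
  induction m using Int.induction_on with
  | zero => simp
  | succ m ih =>
      have h1 : p + ((m : ℤ) + 1) * n = (p + m * n) + n := by ring
      rw [h1, hf, ih]; ring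
  | pred m ih =>
      have h1 : p + (-(m : ℤ) - 1) * n + n = p + (-(m : ℤ)) * n := by ring
      have := hf (p + (-(m : ℤ) - 1) * n)
      rw [h1, ih] at this
      omega

def F (n : ℕ) (hn : 1 ≤ n) (σ : Equiv.Perm (Fin n)) (x : ℤ) : ℤ :=
  x + 1 + (((σ (rmap n hn x) : ℕ) - x) % (n : ℤ))

def G (n : ℕ) (hn : 1 ≤ n) (σ : Equiv.Perm (Fin n)) (y : ℤ) : ℤ :=
  y - 1 - ((y - 2 - ((σ.symm (rmap n hn y) : ℕ) : ℤ)) % (n : ℤ))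

lemma mod_bounds {n : ℕ} (hn : 1 ≤ n) (a : ℤ) :
    0 ≤ a % (n : ℤ) ∧ a % (n : ℤ) < n := by
  have h0 : (0 : ℤ) < n := by exact_mod_cast hn
  exact ⟨Int.emod_nonneg a (by omega), Int.emod_lt_of_pos a h0⟩

lemma F_bounds {n : ℕ} (hn : 1 ≤ n) (σ : Equiv.Perm (Fin n)) (x : ℤ) :
    x < F n hn σ x ∧ F n hn σ x ≤ x + n := by
  have := mod_bounds hn (((σ (rmap n hn x) : ℕ) : ℤ) - x)
  unfold F; omega

lemma F_modeq {n : ℕ} (hn : 1 ≤ n) (σ : Equiv.Perm (Fin n)) (x : ℤ) :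
    F n hn σ x ≡ ((σ (rmap n hn x) : ℕ) : ℤ) + 1 [ZMOD (n : ℤ)] := by
  have h : (((σ (rmap n hn x) : ℕ) : ℤ) - x) % (n : ℤ)
      ≡ ((σ (rmap n hn x) : ℕ) : ℤ) - x [ZMOD (n : ℤ)] :=
    Int.emod_emod_of_dvd _ dvd_rfl
  have := (Int.ModEq.refl (x + 1)).add h
  unfold F
  calc x + 1 + (((σ (rmap n hn x) : ℕ) - x) % (n : ℤ))
      ≡ x + 1 + (((σ (rmap n hn x) : ℕ) : ℤ) - x) [ZMOD (n : ℤ)] := this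
    _ = ((σ (rmap n hn x) : ℕ) : ℤ) + 1 := by ring

lemma G_bounds {n : ℕ} (hn : 1 ≤ n) (σ : Equiv.Perm (Fin n)) (y : ℤ) :
    y - n ≤ G n hn σ y ∧ G n hn σ y ≤ y - 1 := by
  have := mod_bounds hn (y - 2 - ((σ.symm (rmap n hn y) : ℕ) : ℤ))
  unfold G; omega

lemma G_modeq {n : ℕ} (hn : 1 ≤ n) (σ : Equiv.Perm (Fin n)) (y : ℤ) :
    G n hn σ y ≡ ((σ.symm (rmap n hn y) : ℕ) : ℤ) + 1 [ZMOD (n : ℤ)] := by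
  have h : (y - 2 - ((σ.symm (rmap n hn y) : ℕ) : ℤ)) % (n : ℤ)
      ≡ y - 2 - ((σ.symm (rmap n hn y) : ℕ) : ℤ) [ZMOD (n : ℤ)] :=
    Int.emod_emod_of_dvd _ dvd_rfl
  have := (Int.ModEq.refl (y - 1)).sub h
  unfold G
  calc G n hn σ y ≡ y - 1 - (y - 2 - ((σ.symm (rmap n hn y) : ℕ) : ℤ)) [ZMOD (n : ℤ)] := this
    _ = ((σ.symm (rmap n hn y) : ℕ) : ℤ) + 1 := by ring

lemma GF {n : ℕ} (hn : 1 ≤ n) (σ : Equiv.Perm (Fin n)) (x : ℤ) :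
    G n hn σ (F n hn σ x) = x := by
  have hr : rmap n hn (F n hn σ x) = σ (rmap n hn x) :=
    rmap_unique hn _ _ (F_modeq hn σ x)
  have hb := F_bounds hn σ x
  unfold G
  rw [hr, Equiv.symm_apply_apply]
  have h1 : F n hn σ x - 2 - ((rmap n hn x : ℕ) : ℤ)
      ≡ F n hn σ x - 1 - x [ZMOD (n : ℤ)] := by
    have := rmap_modeq hn x  -- x ≡ rmap x + 1
    have h2 : ((rmap n hn x : ℕ) : ℤ) ≡ x - 1 [ZMOD (n : ℤ)] := by
      have := this.sub_right 1
      simpa using this.symm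
    have := (Int.ModEq.refl (F n hn σ x - 2)).sub h2
    calc F n hn σ x - 2 - ((rmap n hn x : ℕ) : ℤ)
        ≡ F n hn σ x - 2 - (x - 1) [ZMOD (n : ℤ)] := this
      _ = F n hn σ x - 1 - x := by ring
  have h3 : (F n hn σ x - 2 - ((rmap n hn x : ℕ) : ℤ)) % (n : ℤ) = F n hn σ x - 1 - x := by
    have : (F n hn σ x - 2 - ((rmap n hn x : ℕ) : ℤ)) % (n : ℤ)
        = (F n hn σ x - 1 - x) % (n : ℤ) := h1
    rw [this]
    exact Int.emod_eq_of_lt (by omega) (by omega)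
  rw [h3]; ring

lemma FG {n : ℕ} (hn : 1 ≤ n) (σ : Equiv.Perm (Fin n)) (y : ℤ) :
    F n hn σ (G n hn σ y) = y := by
  have hr : rmap n hn (G n hn σ y) = σ.symm (rmap n hn y) :=
    rmap_unique hn _ _ (G_modeq hn σ y)
  have hb := G_bounds hn σ y
  unfold F
  rw [hr, Equiv.apply_symm_apply]
  have h2 : ((rmap n hn y : ℕ) : ℤ) ≡ y - 1 [ZMOD (n : ℤ)] := by
    have := (rmap_modeq hn y).sub_right 1
    simpa using this.symm
  have h1 : ((rmap n hn y : ℕ) : ℤ) - G n hn σ y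
      ≡ y - 1 - G n hn σ y [ZMOD (n : ℤ)] := h2.sub_right _
  have h3 : (((rmap n hn y : ℕ) : ℤ) - G n hn σ y) % (n : ℤ) = y - 1 - G n hn σ y := by
    have : (((rmap n hn y : ℕ) : ℤ) - G n hn σ y) % (n : ℤ)
        = (y - 1 - G n hn σ y) % (n : ℤ) := h1
    rw [this]
    exact Int.emod_eq_of_lt (by omega) (by omega)
  rw [h3]; ring

def Fequiv (n : ℕ) (hn : 1 ≤ n) (σ : Equiv.Perm (Fin n)) : ℤ ≃ ℤ :=
  ⟨F n hn σ, G n hn σ, GF hn σ, FG hn σ⟩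

lemma rmap_add_n {n : ℕ} (hn : 1 ≤ n) (x : ℤ) : rmap n hn (x + n) = rmap n hn x := by
  apply rmap_unique
  have h := rmap_modeq hn x
  have hn0 : (x : ℤ) + n ≡ x + 0 [ZMOD (n : ℤ)] :=
    (Int.ModEq.refl x).add ((Int.modEq_zero_iff_dvd).mpr dvd_rfl)
  calc (x : ℤ) + n ≡ x + 0 [ZMOD (n : ℤ)] := hn0
    _ = x := by ring
    _ ≡ ((rmap n hn x : ℕ) : ℤ) + 1 [ZMOD (n : ℤ)] := h

lemma F_periodic {n : ℕ} (hn : 1 ≤ n) (σ : Equiv.Perm (Fin n)) (x : ℤ) :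
    F n hn σ (x + n) = F n hn σ x + n := by
  unfold F
  rw [rmap_add_n hn]
  have : ((σ (rmap n hn x) : ℕ) : ℤ) - (x + n) = ((σ (rmap n hn x) : ℕ) : ℤ) - x - n := by ring
  rw [this]
  have h4 : (((σ (rmap n hn x) : ℕ) : ℤ) - x - n) % (n : ℤ)
      = (((σ (rmap n hn x) : ℕ) : ℤ) - x) % (n : ℤ) := by
    simp [Int.sub_emod]
  rw [h4]
  ring

lemma rmap_fin {n : ℕ} (hn : 1 ≤ n) (p : Fin n) : rmap n hn (((p : ℕ) : ℤ) + 1) = p :=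
  rmap_unique hn _ _ (Int.ModEq.refl _)

end PBAP

namespace PBAP

lemma rmap_coe_Icc {n : ℕ} (hn : 1 ≤ n) {j : ℤ} (h1 : 1 ≤ j) (h2 : j ≤ n) :
    ((rmap n hn j : ℕ) : ℤ) + 1 = j := by
  have hc := rmap_coe hn j
  have he : (j - 1) % (n : ℤ) = j - 1 := Int.emod_eq_of_lt (by omega) (by omega)
  omega

lemma sum_Icc_eq {n : ℕ} (hn : 1 ≤ n) (h : ℤ → ℤ) :
    ∑ j ∈ Finset.Icc (1 : ℤ) (n : ℤ), h j = ∑ p : Fin n, h (((p : ℕ) : ℤ) + 1) := by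
  refine Finset.sum_bij' (i := fun x _ => rmap n hn x)
    (j := fun (p : Fin n) _ => ((p : ℕ) : ℤ) + 1) ?_ ?_ ?_ ?_ ?_
  · intro a _; exact Finset.mem_univ _
  · intro p _
    have := p.isLt
    refine Finset.mem_Icc.mpr ⟨by omega, ?_⟩
    have h2 : ((p : ℕ) : ℤ) < n := by exact_mod_cast this
    omega
  · intro a ha
    obtain ⟨h1, h2⟩ := Finset.mem_Icc.mp ha
    exact rmap_coe_Icc hn h1 h2
  · intro p _; exact rmap_fin hn p
  · intro a ha
    obtain ⟨h1, h2⟩ := Finset.mem_Icc.mp ha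
    rw [rmap_coe_Icc hn h1 h2]

end PBAP

/-- Remark 1.1 / Section 2.1: for every permutation `σ` of `[n]` there is a unique
bijection `f : ℤ → ℤ` with `f(p+n) = f(p)+n`, `p < f(p) ≤ p+n`, and
`f(p) ≡ σ(p) (mod n)` for `p ∈ [n]`; moreover this `f` satisfies
`Σ_{p=1}^{n} (f(p)−p) = kn` for some `1 ≤ k ≤ n`, so it is a loopless
`(k,n)`-bounded affine permutation, and conversely every loopless bounded affine
permutation arises this way (so the construction is a bijection).  Here `[n]` is
identified with `Fin n` via `p ↦ p+1`. -/
theorem perm_loopless_BAP_bijection (n : ℕ) (hn : 1 ≤ n) (σ : Equiv.Perm (Fin n)) :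
    (∃! f : ℤ ≃ ℤ,
      (∀ p : ℤ, f (p + n) = f p + n) ∧
      (∀ p : ℤ, p < f p ∧ f p ≤ p + n) ∧
      (∀ p : Fin n, f ((p : ℤ) + 1) ≡ ((σ p : ℤ) + 1) [ZMOD (n : ℤ)])) ∧
    (∀ f : ℤ ≃ ℤ,
      ((∀ p : ℤ, f (p + n) = f p + n) ∧
       (∀ p : ℤ, p < f p ∧ f p ≤ p + n) ∧
       (∀ p : Fin n, f ((p : ℤ) + 1) ≡ ((σ p : ℤ) + 1) [ZMOD (n : ℤ)])) →
      ∃ k : ℕ, 1 ≤ k ∧ k ≤ n ∧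
        (∑ j ∈ Finset.Icc (1 : ℤ) (n : ℤ), (f j - j)) = (k : ℤ) * n) ∧
    (∀ g : ℤ ≃ ℤ,
      (∀ p : ℤ, g (p + n) = g p + n) →
      (∀ p : ℤ, p < g p ∧ g p ≤ p + n) →
      ∃ τ : Equiv.Perm (Fin n),
        ∀ p : Fin n, g ((p : ℤ) + 1) ≡ ((τ p : ℤ) + 1) [ZMOD (n : ℤ)]) := by
  classical
  have h0 : (0 : ℤ) < n := by exact_mod_cast hn
  have hFapp : ∀ x : ℤ, (PBAP.Fequiv n hn σ) x = PBAP.F n hn σ x := fun _ => rfl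
  refine ⟨⟨PBAP.Fequiv n hn σ, ⟨?_, ?_, ?_⟩, ?_⟩, ?_, ?_⟩
  · -- periodicity
    intro p; rw [hFapp, hFapp]; exact PBAP.F_periodic hn σ p
  · -- bounds
    intro p; rw [hFapp]; exact PBAP.F_bounds hn σ p
  · -- congruence
    intro p
    have h := PBAP.F_modeq hn σ (((p : ℕ) : ℤ) + 1)
    rw [PBAP.rmap_fin hn p] at h
    rw [hFapp]; exact h
  · -- uniqueness
    rintro f ⟨hper, hbnd, hcong⟩
    apply Equiv.ext; intro x
    set c := PBAP.rmap n hn x with hc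
    have hq : ((c : ℕ) : ℤ) + 1 + ((x - 1) / n) * n = x := by
      have h1 := Int.emod_add_mul_ediv (x - 1) (n : ℤ)
      have h2 := PBAP.rmap_coe hn x
      have h3 : ((x - 1) / (n : ℤ)) * n = (n : ℤ) * ((x - 1) / n) := mul_comm _ _
      omega
    have h1 : f x = f (((c : ℕ) : ℤ) + 1) + ((x - 1) / n) * n := by
      conv_lhs => rw [← hq]
      exact PBAP.shift f hper _ _
    have hfmod : f x ≡ ((σ c : ℕ) : ℤ) + 1 [ZMOD (n : ℤ)] := by
      have h2 := hcong c
      have h3 : (((x - 1) / n) * (n : ℤ)) ≡ 0 [ZMOD (n : ℤ)] :=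
        (Int.modEq_zero_iff_dvd).mpr ⟨_, mul_comm _ _⟩
      calc f x = f (((c : ℕ) : ℤ) + 1) + ((x - 1) / n) * n := h1
        _ ≡ (((σ c : ℕ) : ℤ) + 1) + 0 [ZMOD (n : ℤ)] := h2.add h3
        _ = ((σ c : ℕ) : ℤ) + 1 := by ring
    have hFmod := PBAP.F_modeq hn σ x
    rw [hFapp]
    exact PBAP.unique_in_window hn (hbnd x).1 (hbnd x).2
      (PBAP.F_bounds hn σ x).1 (PBAP.F_bounds hn σ x).2
      (hfmod.trans (hFmod.symm))
  · -- sum is a multiple of n with 1 ≤ k ≤ n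
    rintro f ⟨hper, hbnd, hcong⟩
    set S := ∑ j ∈ Finset.Icc (1 : ℤ) (n : ℤ), (f j - j) with hS
    have hterm : ∀ j ∈ Finset.Icc (1 : ℤ) (n : ℤ),
        (f j - j) % (n : ℤ) = (((σ (PBAP.rmap n hn j) : ℕ) : ℤ) + 1 - j) % (n : ℤ) := by
      intro j hj
      obtain ⟨hj1, hj2⟩ := Finset.mem_Icc.mp hj
      have hcoe := PBAP.rmap_coe_Icc hn hj1 hj2
      have h2 := hcong (PBAP.rmap n hn j)
      rw [hcoe] at h2
      exact h2.sub_right j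
    have h5 : ∑ j ∈ Finset.Icc (1 : ℤ) (n : ℤ),
        (((σ (PBAP.rmap n hn j) : ℕ) : ℤ) + 1 - j) = 0 := by
      rw [PBAP.sum_Icc_eq hn]
      have heq : ∀ p : Fin n,
          ((σ (PBAP.rmap n hn (((p : ℕ) : ℤ) + 1)) : ℕ) : ℤ) + 1 - (((p : ℕ) : ℤ) + 1)
          = ((σ p : ℕ) : ℤ) - ((p : ℕ) : ℤ) := by
        intro p; rw [PBAP.rmap_fin hn p]; ring
      rw [Finset.sum_congr rfl (fun p _ => heq p), Finset.sum_sub_distrib,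
        Equiv.sum_comp σ (fun p : Fin n => ((p : ℕ) : ℤ))]
      ring
    have hdvd : (n : ℤ) ∣ S := by
      apply Int.dvd_of_emod_eq_zero
      rw [hS, Finset.sum_int_mod, Finset.sum_congr rfl hterm, ← Finset.sum_int_mod, h5]
      simp
    have hcard : (Finset.Icc (1 : ℤ) (n : ℤ)).card = n := by
      rw [Int.card_Icc]; omega
    have hlo : (n : ℤ) ≤ S := by
      calc (n : ℤ) = ∑ _j ∈ Finset.Icc (1 : ℤ) (n : ℤ), (1 : ℤ) := by
            rw [Finset.sum_const, hcard]; simp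
        _ ≤ S := Finset.sum_le_sum (fun j _ => by have := (hbnd j).1; omega)
    have hhi : S ≤ (n : ℤ) * n := by
      calc S ≤ ∑ _j ∈ Finset.Icc (1 : ℤ) (n : ℤ), (n : ℤ) :=
            Finset.sum_le_sum (fun j _ => by have := (hbnd j).2; omega)
        _ = (n : ℤ) * n := by rw [Finset.sum_const, hcard]; simp [mul_comm]
    obtain ⟨d, hd⟩ := hdvd
    have hd1 : 1 ≤ d := by nlinarith
    have hdn : d ≤ n := by nlinarith
    refine ⟨d.toNat, by omega, by omega, ?_⟩
    have : ((d.toNat : ℕ) : ℤ) = d := by omega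
    rw [this, hd]; ring
  · -- every loopless bounded affine permutation comes from a permutation
    intro g hper _hbnd
    have inj : Function.Injective (fun p : Fin n => PBAP.rmap n hn (g (((p : ℕ) : ℤ) + 1))) := by
      intro a b hab
      simp only [] at hab
      have h2 : g (((a : ℕ) : ℤ) + 1) ≡ g (((b : ℕ) : ℤ) + 1) [ZMOD (n : ℤ)] := by
        calc g (((a : ℕ) : ℤ) + 1)
            ≡ ((PBAP.rmap n hn (g (((a : ℕ) : ℤ) + 1)) : ℕ) : ℤ) + 1 [ZMOD (n : ℤ)] :=
              PBAP.rmap_modeq hn _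
          _ = ((PBAP.rmap n hn (g (((b : ℕ) : ℤ) + 1)) : ℕ) : ℤ) + 1 := by rw [hab]
          _ ≡ g (((b : ℕ) : ℤ) + 1) [ZMOD (n : ℤ)] := (PBAP.rmap_modeq hn _).symm
      obtain ⟨t, ht⟩ := h2.dvd
      have h3 : g (((a : ℕ) : ℤ) + 1 + t * n) = g (((b : ℕ) : ℤ) + 1) := by
        rw [PBAP.shift g hper t]
        have : (t * (n : ℤ)) = (n : ℤ) * t := mul_comm _ _
        omega
      have h4 := g.injective h3
      have ha := a.isLt
      have hb := b.isLt
      have ha' : ((a : ℕ) : ℤ) < n := by exact_mod_cast ha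
      have hb' : ((b : ℕ) : ℤ) < n := by exact_mod_cast hb
      have hab' : ((b : ℕ) : ℤ) - a = t * n := by omega
      have h1 : (n : ℤ) * t < n * 1 := by
        rw [mul_one]
        have : t * (n : ℤ) = n * t := mul_comm _ _
        omega
      have h2' : (n : ℤ) * (-1) < n * t := by
        have e1 : (n : ℤ) * (-1) = -n := by ring
        have e2 : t * (n : ℤ) = n * t := mul_comm _ _
        omega
      have t1 := (mul_lt_mul_iff_right₀ h0).mp h1
      have t2 := (mul_lt_mul_iff_right₀ h0).mp h2'
      have ht0 : t = 0 := by omega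
      rw [ht0] at hab'
      apply Fin.ext
      omega
    let e : Equiv.Perm (Fin n) :=
      Equiv.ofBijective _ ((Finite.injective_iff_bijective).mp inj)
    refine ⟨e, fun p => ?_⟩
    have he : ((e p : ℕ) : ℤ) = ((PBAP.rmap n hn (g (((p : ℕ) : ℤ) + 1)) : ℕ) : ℤ) := rfl
    rw [he]
    exact PBAP.rmap_modeq hn _
end

section
/- Let N ≥ 2 be an integer, let ζ := exp(iπ/(2N)) ∈ ℂ, and let z_p := ζ^{2p−N} for p ∈ [N−1]. Then for every q ∈ [N−1], ((−1)^N / N) · Σ_{p=1}^{N−1} z_p^{2q} (1 + z_p²) equals 1 if q = N−1 and equals 0 otherwise. (Equivalently, the last row of the inverse of the (N−1)×(N−1) Vandermonde-type matrix with entries z_p^{2q−1} has p-th entry (−1)^N z_p (1 + z_p²)/N; this is the key computation in the evaluation of the response matrix of the regular 2N-gon, Theorem 6.5.) -/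
lemma vandermonde_aux_geom (N : ℕ) (hN : 2 ≤ N) (k : ℕ) (hk1 : 1 ≤ k) (hk2 : k ≤ N) :
    ∑ p ∈ Finset.Icc 1 (N - 1),
      (Complex.exp (Complex.I * (Real.pi : ℂ) / (2 * (N : ℂ)))) ^ ((2 * (k : ℤ)) * (2 * (p : ℤ) - (N : ℤ))) =
    if k = N then (-1 : ℂ) ^ N * ((N : ℂ) - 1) else -(-1 : ℂ) ^ k := by
  set ζ : ℂ := Complex.exp (Complex.I * (Real.pi : ℂ) / (2 * (N : ℂ))) with hζdef
  have hζ : ζ ≠ 0 := Complex.exp_ne_zero _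
  have hNc : (N : ℂ) ≠ 0 := Nat.cast_ne_zero.mpr (by omega)
  have h2N : ζ ^ (2 * N) = -1 := by
    rw [hζdef, ← Complex.exp_nat_mul]
    rw [show ((2 * N : ℕ) : ℂ) * (Complex.I * (Real.pi : ℂ) / (2 * (N : ℂ))) = Real.pi * Complex.I by
      push_cast; field_simp]
    exact Complex.exp_pi_mul_I
  have h4N : ζ ^ (4 * N) = 1 := by
    have h : ζ ^ (4 * N) = (ζ ^ (2 * N)) ^ 2 := by rw [← pow_mul]; ring_nf
    rw [h, h2N]; ring
  have key : ∀ p : ℕ, ζ ^ ((2 * (k : ℤ)) * (2 * (p : ℤ) - (N : ℤ)))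
      = (-1 : ℂ) ^ k * (ζ ^ (4 * k)) ^ p := by
    intro p
    have e1 : ζ ^ (4 * k * p) = (ζ ^ (4 * k)) ^ p := pow_mul ζ (4 * k) p
    have e2 : ζ ^ (2 * k * N) = ((-1 : ℂ)) ^ k := by
      rw [show 2 * k * N = 2 * N * k by ring, pow_mul ζ (2 * N) k, h2N]
    rw [show (2 * (k : ℤ)) * (2 * (p : ℤ) - (N : ℤ))
        = ((4 * k * p : ℕ) : ℤ) + (-(((2 * k * N : ℕ) : ℤ))) by push_cast; ring]
    rw [zpow_add₀ hζ, zpow_natCast, zpow_neg, zpow_natCast, e1, e2]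
    rw [show ((-1 : ℂ) ^ k)⁻¹ = (-1 : ℂ) ^ k by rw [← inv_pow]; norm_num]
    ring
  simp only [key, ← Finset.mul_sum]
  by_cases hk : k = N
  · rw [if_pos hk, hk, h4N]
    simp only [one_pow]
    rw [Finset.sum_const, nsmul_eq_mul, Nat.card_Icc]
    have hcard : ((N - 1 + 1 - 1 : ℕ) : ℂ) = (N : ℂ) - 1 := by
      rw [show N - 1 + 1 - 1 = N - 1 by omega, Nat.cast_sub (by omega)]; norm_num
    rw [hcard]; ring
  · rw [if_neg hk]
    have hkN : k < N := lt_of_le_of_ne hk2 hk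
    set w : ℂ := ζ ^ (4 * k) with hwdef
    have hwN : w ^ N = 1 := by
      rw [hwdef, ← pow_mul, show 4 * k * N = (4 * N) * k by ring, pow_mul, h4N, one_pow]
    have hw1 : w ≠ 1 := by
      intro hw
      rw [hwdef, hζdef, ← Complex.exp_nat_mul] at hw
      rw [Complex.exp_eq_one_iff] at hw
      obtain ⟨n, hn⟩ := hw
      have hπ : (Real.pi : ℂ) ≠ 0 := by exact_mod_cast Real.pi_ne_zero
      have hI : Complex.I ≠ 0 := Complex.I_ne_zero
      have hkn : (k : ℂ) = n * N := by
        field_simp at hn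
        have h0 : (4 : ℂ) * (Complex.I * (Real.pi : ℂ)) ≠ 0 :=
          mul_ne_zero (by norm_num) (mul_ne_zero hI hπ)
        apply mul_left_cancel₀ h0
        push_cast at hn
        linear_combination (Complex.I * (Real.pi : ℂ)) * hn
      have hkz : (k : ℤ) = n * N := by exact_mod_cast hkn
      have hdvd : (N : ℤ) ∣ (k : ℤ) := ⟨n, by linarith⟩
      have hdvd' : N ∣ k := by exact_mod_cast hdvd
      have := Nat.le_of_dvd (by omega) hdvd'
      omega
    have hgeo : ∑ p ∈ Finset.range N, w ^ p = 0 := by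
      rw [geom_sum_eq hw1, hwN]
      simp
    have hsplit : ∑ p ∈ Finset.Icc 1 (N - 1), w ^ p
        = ∑ p ∈ Finset.range N, w ^ p - ∑ p ∈ Finset.range 1, w ^ p := by
      rw [show Finset.Icc 1 (N - 1) = Finset.Ico 1 N by
            rw [← Finset.Ico_add_one_right_eq_Icc]; congr 1; omega,
          Finset.sum_Ico_eq_sub _ (by omega : 1 ≤ N)]
    rw [hsplit, hgeo]
    simp

/-- The key computation in the evaluation of the response matrix of the regular
`2N`-gon (Theorem 6.5): with `ζ = exp(iπ/(2N))` and `z_p = ζ^{2p−N}` for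
`p ∈ [N−1]`, for every `q ∈ [N−1]` one has
`((−1)^N / N) · Σ_{p=1}^{N−1} z_p^{2q} (1 + z_p²) = δ_{q, N−1}`. -/
theorem vandermonde_inverse_last_row (N : ℕ) (hN : 2 ≤ N) (q : ℕ)
    (hq1 : 1 ≤ q) (hq2 : q ≤ N - 1) :
    ((-1 : ℂ) ^ N / (N : ℂ)) *
      ∑ p ∈ Finset.Icc 1 (N - 1),
        ((Complex.exp (Complex.I * (Real.pi : ℂ) / (2 * (N : ℂ))) ^ (2 * (p : ℤ) - (N : ℤ))) ^ (2 * q) *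
          (1 + (Complex.exp (Complex.I * (Real.pi : ℂ) / (2 * (N : ℂ))) ^ (2 * (p : ℤ) - (N : ℤ))) ^ 2)) =
      if q = N - 1 then 1 else 0 := by
  set ζ : ℂ := Complex.exp (Complex.I * (Real.pi : ℂ) / (2 * (N : ℂ))) with hζdef
  have hNc : (N : ℂ) ≠ 0 := Nat.cast_ne_zero.mpr (by omega)
  have hterm : ∀ p ∈ Finset.Icc 1 (N - 1),
      (ζ ^ (2 * (p : ℤ) - (N : ℤ))) ^ (2 * q) * (1 + (ζ ^ (2 * (p : ℤ) - (N : ℤ))) ^ 2)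
        = ζ ^ ((2 * (q : ℤ)) * (2 * (p : ℤ) - (N : ℤ)))
          + ζ ^ ((2 * ((q + 1 : ℕ) : ℤ)) * (2 * (p : ℤ) - (N : ℤ))) := by
    intro p _
    set m : ℤ := 2 * (p : ℤ) - (N : ℤ) with hm
    have e1 : (ζ ^ m) ^ (2 * q) = ζ ^ ((2 * (q : ℤ)) * m) := by
      rw [← zpow_natCast (ζ ^ m), ← zpow_mul]
      congr 1
      push_cast
      ring
    have e2 : (ζ ^ m) ^ (2 * q) * (ζ ^ m) ^ 2 = ζ ^ ((2 * ((q + 1 : ℕ) : ℤ)) * m) := by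
      rw [← pow_add, ← zpow_natCast (ζ ^ m), ← zpow_mul]
      congr 1
      push_cast
      ring
    rw [mul_add, mul_one, e2, e1]
  rw [Finset.sum_congr rfl hterm, Finset.sum_add_distrib]
  rw [vandermonde_aux_geom N hN q hq1 (by omega),
      vandermonde_aux_geom N hN (q + 1) (by omega) (by omega)]
  rw [if_neg (by omega : ¬ q = N)]
  by_cases hqN : q = N - 1
  · rw [if_pos (by omega : q + 1 = N), if_pos hqN]
    have hq' : q = N - 1 := hqN
    have hpow : -(-1 : ℂ) ^ q = (-1 : ℂ) ^ N := by
      rw [show N = q + 1 by omega, pow_succ]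
      ring
    rw [hpow]
    have hsq : (-1 : ℂ) ^ N * (-1 : ℂ) ^ N = 1 := by
      rw [← pow_add]
      exact Even.neg_one_pow ⟨N, rfl⟩
    field_simp
    linear_combination (N : ℂ) * hsq
  · rw [if_neg (by omega : ¬ q + 1 = N), if_neg hqN]
    rw [pow_succ]
    ring
end

section
/- Let 1 ≤ k ≤ n and set θ̃_p := pπ/n for all p ∈ ℤ (the regular tuple). Define γ : ℝ → ℝⁿ by γ_r(t) = Π_{j=1}^{k−1} sin(t − (r+j)π/n) for r ∈ [n], and let S : ℝⁿ → ℝⁿ be the twisted cyclic shift S(x_1, …, x_n) = (x_2, …, x_n, (−1)^{k−1} x_1). Then S(γ(t)) = γ(t − π/n) for every t ∈ ℝ; consequently S maps the ℝ-linear span of {γ(t) : t ∈ ℝ} onto itself. (This is the cyclic-symmetry computation showing that the boundary measurement of the regular tuple is the unique cyclically symmetric point of Gr_{≥0}(k,n), Proposition 6.6.) -/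
/-- The cyclic-symmetry computation from Proposition 6.6: for the regular tuple
`θ̃_p = pπ/n` and the top-cell curve `γ(t)_r = Π_{j=1}^{k−1} sin(t − (r+j)π/n)`
(coordinates indexed by `Fin n` via `r ↦ r+1 ∈ [n]`), the twisted cyclic shift
`S(x_1,…,x_n) = (x_2,…,x_n,(−1)^{k−1}x_1)` satisfies `S(γ(t)) = γ(t − π/n)` for
all `t`; consequently `S` maps the linear span of the curve onto itself. -/
theorem regular_tuple_cyclic_symmetry (k n : ℕ) (hk : 1 ≤ k) (hkn : k ≤ n)
    (hn : 0 < n)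
    (γ : ℝ → Fin n → ℝ)
    (hγ : ∀ t : ℝ, ∀ r : Fin n,
      γ t r = ∏ j ∈ Finset.Icc 1 (k - 1),
        Real.sin (t - (((r : ℕ) : ℝ) + 1 + (j : ℝ)) * Real.pi / n))
    (S : (Fin n → ℝ) → Fin n → ℝ)
    (hS : ∀ x : Fin n → ℝ, ∀ r : Fin n,
      S x r = if h : (r : ℕ) + 1 < n then x ⟨(r : ℕ) + 1, h⟩
              else (-1 : ℝ) ^ (k - 1) * x ⟨0, hn⟩) :
    (∀ t : ℝ, S (γ t) = γ (t - Real.pi / n)) ∧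
    S '' (Submodule.span ℝ (Set.range γ) : Set (Fin n → ℝ)) =
      (Submodule.span ℝ (Set.range γ) : Set (Fin n → ℝ)) := by
  have hn' : (n : ℝ) ≠ 0 := Nat.cast_ne_zero.mpr hn.ne'
  have key : ∀ t : ℝ, S (γ t) = γ (t - Real.pi / n) := by
    intro t
    funext r
    rw [hS, hγ]
    split
    · next h =>
      rw [hγ]
      rw [hγ]
      apply Finset.prod_congr rfl
      intro j hj
      congr 1
      push_cast
      field_simp
      ring
    · next h =>
      have hr : (r : ℕ) + 1 = n := by
        have := r.isLt; omega
      have hcast : ((r : ℕ) : ℝ) + 1 = (n : ℝ) := by exact_mod_cast congrArg Nat.cast hr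
      rw [hγ]
      have hterm : ∀ j ∈ Finset.Icc 1 (k - 1),
          Real.sin (t - Real.pi / n - (((r : ℕ) : ℝ) + 1 + (j : ℝ)) * Real.pi / n)
            = (-1) * Real.sin (t - (((0 : ℕ) : ℝ) + 1 + (j : ℝ)) * Real.pi / n) := by
        intro j _
        have harg : t - Real.pi / n - (((r : ℕ) : ℝ) + 1 + (j : ℝ)) * Real.pi / n
            = (t - (((0 : ℕ) : ℝ) + 1 + (j : ℝ)) * Real.pi / n) - Real.pi := by
          rw [hcast]
          field_simp
          ring
        rw [harg, Real.sin_sub_pi]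
        ring
      rw [Finset.prod_congr rfl hterm, Finset.prod_mul_distrib, Finset.prod_const,
        Nat.card_Icc]
      simp
  refine ⟨key, ?_⟩
  -- S agrees with a linear map
  let L : (Fin n → ℝ) →ₗ[ℝ] (Fin n → ℝ) :=
    { toFun := fun x r => if h : (r : ℕ) + 1 < n then x ⟨(r : ℕ) + 1, h⟩
              else (-1 : ℝ) ^ (k - 1) * x ⟨0, hn⟩
      map_add' := by
        intro x y
        funext r
        by_cases h : (r : ℕ) + 1 < n <;> simp [h] <;> ring
      map_smul' := by
        intro c x
        funext r
        by_cases h : (r : ℕ) + 1 < n <;> simp [h] <;> ring }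
  have hSL : S = ⇑L := by
    funext x r
    rw [hS]
    rfl
  have himg : ⇑L '' Set.range γ = Set.range γ := by
    ext y
    simp only [Set.mem_image, Set.mem_range]
    constructor
    · rintro ⟨x, ⟨t, rfl⟩, rfl⟩
      exact ⟨t - Real.pi / n, by rw [← hSL, key t]⟩
    · rintro ⟨t, rfl⟩
      refine ⟨γ (t + Real.pi / n), ⟨t + Real.pi / n, rfl⟩, ?_⟩
      rw [← hSL, key (t + Real.pi / n)]
      congr 1
      ring
  rw [hSL, ← Submodule.map_coe, Submodule.map_span, himg]
end
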